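/- arXiv:1603.09285 — 12 statements merged into one kernel-verified Lean document; each statement's English description precedes it below -/
import Mathlib

section
/- Let z be a point of the hyperbolic upper half-plane ℍ and R > 0. Then the complex number R²/conj(z) has positive imaginary part (equal to R²·Im z/|z|²), hence defines a point w ∈ ℍ, and the distance from z to the geodesic ℓ_R = {u ∈ ℍ : |u| = R} equals half the distance from z to its reflection w: Metric.infDist z ℓ_R = (1/2)·dist z w. -/
open UpperHalfPlane
open Real

/-- The geodesic `ℓ_R = {u ∈ ℍ : |u| = R}` in the upper half-plane. -/
noncomputable def ell (R : ℝ) : Set ℍ := {u : ℍ | ‖(u : ℂ)‖ = R}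

/-- The point `t·i` of the upper half-plane, for `t > 0`. -/
noncomputable def vpt (t : ℝ) (ht : 0 < t) : ℍ :=
  UpperHalfPlane.mk (t * Complex.I) (by simpa using ht)

private lemma two_arsinh_eq (b : ℝ) :
    2 * arsinh b = arsinh (2 * b * Real.sqrt (1 + b ^ 2)) := by
  rw [← arsinh_sinh (2 * arsinh b), Real.sinh_two_mul, sinh_arsinh, cosh_arsinh]

private lemma sinh_dist_eq (z u : ℍ) :
    Real.sinh (dist z u) =
      2 * (‖(z : ℂ) - u‖ / (2 * Real.sqrt (z.im * u.im))) *
        Real.sqrt (1 + (‖(z : ℂ) - u‖ / (2 * Real.sqrt (z.im * u.im))) ^ 2) := by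
  rw [UpperHalfPlane.dist_eq, Complex.dist_eq, Real.sinh_two_mul, sinh_arsinh, cosh_arsinh]

private lemma sq_sinh_dist (z u : ℍ) :
    Real.sinh (dist z u) ^ 2 =
      ‖(z : ℂ) - u‖ ^ 2 * (‖(z : ℂ) - u‖ ^ 2 + 4 * z.im * u.im) /
        (4 * z.im ^ 2 * u.im ^ 2) := by
  have hy := z.im_pos
  have hv := u.im_pos
  have h1 : Real.sqrt (z.im * u.im) ^ 2 = z.im * u.im := Real.sq_sqrt (by positivity)
  set B := ‖(z : ℂ) - u‖ / (2 * Real.sqrt (z.im * u.im)) with hB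
  have h2 : Real.sqrt (1 + B ^ 2) ^ 2 = 1 + B ^ 2 := Real.sq_sqrt (by positivity)
  have hB2 : B ^ 2 = ‖(z : ℂ) - u‖ ^ 2 / (4 * (z.im * u.im)) := by
    rw [hB, div_pow, mul_pow, h1]; norm_num
  rw [sinh_dist_eq, mul_pow, mul_pow, h2, ← hB, hB2]
  field_simp
  ring

private lemma dist_eq_arsinh {z u : ℍ} {A : ℝ} (hA : 0 ≤ A)
    (h : Real.sinh (dist z u) ^ 2 = A ^ 2) : dist z u = Real.arsinh A := by
  have h0 : 0 ≤ Real.sinh (dist z u) := Real.sinh_nonneg_iff.mpr dist_nonneg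
  have : Real.sinh (dist z u) = A := by
    have := congrArg Real.sqrt h
    rwa [Real.sqrt_sq h0, Real.sqrt_sq hA] at this
  rw [← this, arsinh_sinh]

private lemma arsinh_le_dist {z u : ℍ} {A : ℝ} (hA : 0 ≤ A)
    (h : A ^ 2 ≤ Real.sinh (dist z u) ^ 2) : Real.arsinh A ≤ dist z u := by
  have h0 : 0 ≤ Real.sinh (dist z u) := Real.sinh_nonneg_iff.mpr dist_nonneg
  have hle : A ≤ Real.sinh (dist z u) := by
    have := Real.sqrt_le_sqrt h
    rwa [Real.sqrt_sq h0, Real.sqrt_sq hA] at this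
  calc Real.arsinh A ≤ Real.arsinh (Real.sinh (dist z u)) := Real.arsinh_le_arsinh.mpr hle
    _ = dist z u := arsinh_sinh _


set_option maxHeartbeats 2000000 in
/-- The reflection `R²/conj z` of `z` across the geodesic `ℓ_R` lies in `ℍ`
(its imaginary part is `R²·Im z/|z|²`), and the distance from `z` to `ℓ_R` is half
the distance from `z` to that reflection. -/
theorem stmt2 (z : ℍ) (R : ℝ) (hR : 0 < R) :
    ∃ hw : 0 < (((R : ℂ) ^ 2) / (starRingEnd ℂ) (z : ℂ)).im,
      (((R : ℂ) ^ 2) / (starRingEnd ℂ) (z : ℂ)).im = R ^ 2 * z.im / ‖(z : ℂ)‖ ^ 2 ∧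
      Metric.infDist z (ell R) =
        (1 / 2) * dist z (UpperHalfPlane.mk (((R : ℂ) ^ 2) / (starRingEnd ℂ) (z : ℂ)) hw) := by
  set x : ℝ := (z : ℂ).re with hxdef
  have hy : 0 < z.im := z.im_pos
  set y : ℝ := z.im with hydef
  have hcoeim : (z : ℂ).im = y := UpperHalfPlane.coe_im z
  have hzne : (z : ℂ) ≠ 0 := by
    intro h; rw [h] at hcoeim; simp at hcoeim; linarith
  have hconjne : (starRingEnd ℂ) (z : ℂ) ≠ 0 := by simpa using hzne
  have hns : Complex.normSq (z : ℂ) = x ^ 2 + y ^ 2 := by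
    rw [Complex.normSq_apply, hcoeim]; ring
  have hxy : 0 < x ^ 2 + y ^ 2 := by positivity
  have him : (((R : ℂ) ^ 2) / (starRingEnd ℂ) (z : ℂ)).im = R ^ 2 * y / (x ^ 2 + y ^ 2) := by
    rw [Complex.div_im]
    simp [Complex.normSq_conj, hns, hcoeim, ← Complex.ofReal_pow]
    ring
  have hw : 0 < (((R : ℂ) ^ 2) / (starRingEnd ℂ) (z : ℂ)).im := by
    rw [him]; positivity
  refine ⟨hw, ?_, ?_⟩
  · rw [him, Complex.sq_norm, hns]
  -- main goal
  set a : ℝ := x ^ 2 + y ^ 2 - R ^ 2 with hadef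
  set A : ℝ := |a| / (2 * R * y) with hAdef
  have hA : 0 ≤ A := by positivity
  set w : ℍ := UpperHalfPlane.mk (((R : ℂ) ^ 2) / (starRingEnd ℂ) (z : ℂ)) hw with hwdef
  -- distance to w
  have hzabs2 : ‖(z : ℂ)‖ ^ 2 = x ^ 2 + y ^ 2 := by rw [Complex.sq_norm, hns]
  have hzabspos : 0 < ‖(z : ℂ)‖ := by
    simpa using norm_pos_iff.mpr hzne
  have hsub : (z : ℂ) - ((R : ℂ) ^ 2) / (starRingEnd ℂ) (z : ℂ)
      = ((a : ℝ) : ℂ) / (starRingEnd ℂ) (z : ℂ)  := by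
    have hmc : (starRingEnd ℂ) (z : ℂ) * (z : ℂ) = ((x ^ 2 + y ^ 2 : ℝ) : ℂ) := by
      rw [mul_comm, Complex.mul_conj, hns]
    rw [eq_div_iff hconjne, sub_mul, div_mul_cancel₀ _ hconjne]
    push_cast [hadef] at hmc ⊢
    linear_combination hmc
  have habsw : ‖((z : ℂ) - w)‖ = |a| / ‖(z : ℂ)‖ := by
    rw [hwdef]
    show ‖((z : ℂ) - ((R : ℂ) ^ 2) / (starRingEnd ℂ) (z : ℂ))‖ = _
    rw [hsub, norm_div, Complex.norm_real, Real.norm_eq_abs, Complex.norm_conj]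
  have hwim : w.im = R ^ 2 * y / (x ^ 2 + y ^ 2) := him
  have habszne : ‖(z : ℂ)‖ ≠ 0 := hzabspos.ne'
  have hdistzw : dist z w = 2 * Real.arsinh A := by
    have hs : Real.sqrt (z.im * (R ^ 2 * y / (x ^ 2 + y ^ 2)))
        = R * y / ‖(z : ℂ)‖ := by
      rw [show z.im * (R ^ 2 * y / (x ^ 2 + y ^ 2)) = (R * y / ‖(z : ℂ)‖) ^ 2 by
        rw [div_pow, hzabs2, ← hydef]; ring]
      exact Real.sqrt_sq (by positivity)
    have hcancel : ‖(z : ℂ)‖ * (2 * (R * y / ‖(z : ℂ)‖)) = 2 * R * y := by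
      field_simp
    have harg : ‖((z : ℂ) - w)‖ / (2 * Real.sqrt (z.im * w.im)) = A := by
      rw [habsw, hwim, hs, div_div, hcancel, hAdef]
    rw [UpperHalfPlane.dist_eq, Complex.dist_eq, harg]
  rw [hdistzw, show (1:ℝ)/2 * (2 * Real.arsinh A) = Real.arsinh A by ring]
  -- now: infDist z (ell R) = arsinh A
  have hSsq : (0:ℝ) < (x ^ 2 + y ^ 2 + R ^ 2) ^ 2 - 4 * R ^ 2 * x ^ 2 := by
    nlinarith [sq_nonneg (x ^ 2 + y ^ 2 - R ^ 2), pow_pos (mul_pos hR hy) 2]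
  set S : ℝ := Real.sqrt ((x ^ 2 + y ^ 2 + R ^ 2) ^ 2 - 4 * R ^ 2 * x ^ 2) with hSdef
  have hS : 0 < S := Real.sqrt_pos.mpr hSsq
  have hS2 : S ^ 2 = (x ^ 2 + y ^ 2 + R ^ 2) ^ 2 - 4 * R ^ 2 * x ^ 2 := Real.sq_sqrt hSsq.le
  have hS2y : 2 * y * R ≤ S := by
    have h1 : (2 * y * R) ^ 2 ≤ (x ^ 2 + y ^ 2 + R ^ 2) ^ 2 - 4 * R ^ 2 * x ^ 2 := by
      nlinarith [sq_nonneg (x ^ 2 + y ^ 2 - R ^ 2)]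
    have h2 := Real.sqrt_le_sqrt h1
    rwa [Real.sqrt_sq (by positivity), ← hSdef] at h2
  set mc : ℂ := ⟨2 * R ^ 2 * x / (x ^ 2 + y ^ 2 + R ^ 2), R * S / (x ^ 2 + y ^ 2 + R ^ 2)⟩
    with hmcdef
  have hmcre : mc.re = 2 * R ^ 2 * x / (x ^ 2 + y ^ 2 + R ^ 2) := rfl
  have hmcim : mc.im = R * S / (x ^ 2 + y ^ 2 + R ^ 2) := rfl
  have hmpos : 0 < mc.im := by rw [hmcim]; positivity
  set m : ℍ := UpperHalfPlane.mk mc hmpos with hmdef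
  have hmim : m.im = R * S / (x ^ 2 + y ^ 2 + R ^ 2) := hmcim
  have hmabs2 : ‖mc‖ ^ 2 = R ^ 2 := by
    rw [Complex.sq_norm, Complex.normSq_apply, hmcre, hmcim]
    field_simp
    linear_combination hS2
  have hmmem : m ∈ ell R := by
    show ‖((m : ℍ) : ℂ)‖ = R
    have h3 : ‖mc‖ = R := by
      have h4 := congrArg Real.sqrt hmabs2
      rwa [Real.sqrt_sq (norm_nonneg _), Real.sqrt_sq hR.le] at h4
    exact h3
  have hzm : ‖((z : ℂ) - mc)‖ ^ 2
      = (S ^ 2 - 2 * y * R * S) / (x ^ 2 + y ^ 2 + R ^ 2) := by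
    rw [Complex.sq_norm, Complex.normSq_apply]
    simp only [Complex.sub_re, Complex.sub_im, hmcre, hmcim, hcoeim, ← hxdef]
    field_simp
    linear_combination (R ^ 2 - (x ^ 2 + y ^ 2 + R ^ 2)) * hS2
  have hdistzm : dist z m = Real.arsinh A := by
    apply dist_eq_arsinh hA
    rw [sq_sinh_dist]
    rw [show ((m : ℍ) : ℂ) = mc from rfl, hzm, hmim, ← hydef]
    have hA2 : A ^ 2 = (x ^ 2 + y ^ 2 - R ^ 2) ^ 2 / (2 * R * y) ^ 2 := by
      rw [hAdef, div_pow, sq_abs, hadef]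
    rw [hA2]
    have hdne : ((x : ℝ) ^ 2 + y ^ 2 + R ^ 2) ≠ 0 := by positivity
    rw [show (S ^ 2 - 2 * y * R * S) / (x ^ 2 + y ^ 2 + R ^ 2)
          * ((S ^ 2 - 2 * y * R * S) / (x ^ 2 + y ^ 2 + R ^ 2)
            + 4 * y * (R * S / (x ^ 2 + y ^ 2 + R ^ 2)))
        = S ^ 2 * (S ^ 2 - 4 * y ^ 2 * R ^ 2) / (x ^ 2 + y ^ 2 + R ^ 2) ^ 2 by field_simp; ring]
    rw [show 4 * y ^ 2 * (R * S / (x ^ 2 + y ^ 2 + R ^ 2)) ^ 2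
        = S ^ 2 * (4 * y ^ 2 * R ^ 2) / (x ^ 2 + y ^ 2 + R ^ 2) ^ 2 by field_simp]
    rw [div_div_div_comm, div_self (by positivity), div_one,
      mul_div_mul_left _ _ (by positivity : (S : ℝ) ^ 2 ≠ 0)]
    rw [div_eq_div_iff (by positivity) (by positivity)]
    linear_combination (2 * R * y) ^ 2 * hS2
  apply le_antisymm
  · calc Metric.infDist z (ell R) ≤ dist z m := Metric.infDist_le_dist_of_mem hmmem
      _ = Real.arsinh A := hdistzm
  · by_contra hcon
    push_neg at hcon
    have hne : (ell R).Nonempty := ⟨vpt R hR, by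
      simp [ell, vpt, UpperHalfPlane.coe_mk, abs_of_pos hR]⟩
    obtain ⟨u, hu, hult⟩ := (Metric.infDist_lt_iff hne).mp hcon
    have hle : Real.arsinh A ≤ dist z u := by
      apply arsinh_le_dist hA
      rw [sq_sinh_dist]
      have huabs : ‖((u : ℍ) : ℂ)‖ = R := hu
      have hv : 0 < u.im := u.im_pos
      have hpv : ((u : ℍ) : ℂ).re ^ 2 + u.im ^ 2 = R ^ 2 := by
        have h5 := congrArg (· ^ 2) huabs
        rw [Complex.sq_norm, Complex.normSq_apply] at h5
        rw [← h5, UpperHalfPlane.coe_im]; ring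
      have hzu : ‖(z : ℂ) - u‖ ^ 2
          = (x - ((u : ℍ) : ℂ).re) ^ 2 + (y - u.im) ^ 2 := by
        rw [Complex.sq_norm, Complex.normSq_apply]
        simp only [Complex.sub_re, Complex.sub_im, hcoeim, ← hxdef, UpperHalfPlane.coe_im]
        ring
      set p : ℝ := ((u : ℍ) : ℂ).re
      set v : ℝ := u.im
      have key : R ^ 2 * (((x - p) ^ 2 + (y - v) ^ 2) * ((x - p) ^ 2 + (y - v) ^ 2 + 4 * y * v))
          = (x ^ 2 + y ^ 2 - R ^ 2) ^ 2 * v ^ 2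
            + (p * (x ^ 2 + y ^ 2 + R ^ 2) - 2 * R ^ 2 * x) ^ 2 := by
        linear_combination (2 * R ^ 2 * ((x ^ 2 + y ^ 2 + R ^ 2) - 2 * x * p)
          + R ^ 2 * (p ^ 2 + v ^ 2 - R ^ 2) - (x ^ 2 + y ^ 2 + R ^ 2) ^ 2
          + 4 * R ^ 2 * x ^ 2) * hpv
      have key3 : ((x - p) ^ 2 + (y - v) ^ 2) * ((x - p) ^ 2 + (y - v) ^ 2 + 4 * y * v)
            * (2 * R * y) ^ 2
          = (x ^ 2 + y ^ 2 - R ^ 2) ^ 2 * (4 * y ^ 2 * v ^ 2)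
            + (2 * y * (p * (x ^ 2 + y ^ 2 + R ^ 2) - 2 * R ^ 2 * x)) ^ 2 := by
        linear_combination (4 * y ^ 2) * key
      have hA2 : A ^ 2 = (x ^ 2 + y ^ 2 - R ^ 2) ^ 2 / (2 * R * y) ^ 2 := by
        rw [hAdef, div_pow, sq_abs, hadef]
      have h6 : (x ^ 2 + y ^ 2 - R ^ 2) ^ 2 / (2 * R * y) ^ 2
          ≤ ((x - p) ^ 2 + (y - v) ^ 2) * (((x - p) ^ 2 + (y - v) ^ 2) + 4 * y * v)
            / (4 * y ^ 2 * v ^ 2) := by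
        rw [div_le_div_iff₀ (by positivity) (by positivity)]
        linarith [key3, sq_nonneg (2 * y * (p * (x ^ 2 + y ^ 2 + R ^ 2) - 2 * R ^ 2 * x))]
      rw [hzu, ← hydef, hA2]
      exact h6
    exact absurd hult (not_lt.mpr hle)
end

section
/- For every point z in the hyperbolic upper half-plane ℍ and every R > 0, sinh(Metric.infDist z ℓ_R) = | |z|² − R² | / (2·R·Im z), where ℓ_R = {u ∈ ℍ : |u| = R}. -/
open UpperHalfPlane Real

lemma sinh_dist' (z w : ℍ) :
    Real.sinh (dist z w) =
      dist (z : ℂ) w * dist (z : ℂ) (starRingEnd ℂ (w : ℂ)) / (2 * z.im * w.im) := by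
  have h : dist z w = 2 * (dist z w / 2) := by ring
  rw [h, Real.sinh_two_mul, UpperHalfPlane.sinh_half_dist, UpperHalfPlane.cosh_half_dist]
  have h1 : (0:ℝ) < z.im * w.im := mul_pos z.im_pos w.im_pos
  have h2 : Real.sqrt (z.im*w.im) ≠ 0 := by positivity
  field_simp
  ring_nf
  rw [Real.sq_sqrt h1.le]; ring

lemma keyid (x y a b R : ℝ) (hab : a^2 + b^2 = R^2) :
    R^2*(((x-a)^2+(y-b)^2)*((x-a)^2+(y+b)^2)) - (x^2+y^2-R^2)^2*b^2
      = ((x^2+y^2+R^2)*a - 2*R^2*x)^2 := by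
  linear_combination ((b^2+(a-2*x)^2)*R^2 - (x^2+y^2)^2) * hab


set_option maxHeartbeats 1000000 in
/-- `sinh(d(z, ℓ_R)) = | |z|² − R² | / (2 R Im z)`. -/
theorem stmt3 (z : ℍ) (R : ℝ) (hR : 0 < R) :
    Real.sinh (Metric.infDist z (ell R)) =
      |‖(z : ℂ)‖ ^ 2 - R ^ 2| / (2 * R * z.im) := by
  set x : ℝ := (z : ℂ).re with hx
  set y : ℝ := z.im with hyy
  have hy0 : 0 < y := z.im_pos
  have hzim : (z : ℂ).im = y := rfl
  have hP : ‖(z : ℂ)‖ ^ 2 = x ^ 2 + y ^ 2 := by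
    rw [Complex.sq_norm, Complex.normSq_apply, hzim]; ring
  set T : ℝ := |‖(z : ℂ)‖ ^ 2 - R ^ 2| / (2 * R * z.im) with hT
  have hT0 : 0 ≤ T := by positivity
  -- lower bound on sinh of distances to points of ell R
  have hlow : ∀ u ∈ ell R, T ≤ Real.sinh (dist z u) := by
    intro u hu
    set a : ℝ := (u : ℂ).re with ha
    set b : ℝ := u.im with hb
    have hb0 : 0 < b := u.im_pos
    have huim : (u : ℂ).im = b := rfl
    have hab : a ^ 2 + b ^ 2 = R ^ 2 := by
      have h : Complex.normSq (u : ℂ) = R ^ 2 := by rw [← Complex.sq_norm, hu]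
      rw [Complex.normSq_apply, huim] at h
      nlinarith [h]
    set d1 : ℝ := dist (z : ℂ) (u : ℂ) with hd1'
    set d2 : ℝ := dist (z : ℂ) (starRingEnd ℂ (u : ℂ)) with hd2'
    have hd1 : d1 ^ 2 = (x - a) ^ 2 + (y - b) ^ 2 := by
      rw [hd1', Complex.dist_eq, Complex.sq_norm, Complex.normSq_apply]
      simp only [Complex.sub_re, Complex.sub_im, hzim, huim]
      ring
    have hd2 : d2 ^ 2 = (x - a) ^ 2 + (y + b) ^ 2 := by
      rw [hd2', Complex.dist_eq, Complex.sq_norm, Complex.normSq_apply]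
      simp only [Complex.sub_re, Complex.sub_im, Complex.conj_re, Complex.conj_im, hzim, huim]
      ring
    have hkey : R ^ 2 * (d1 * d2) ^ 2 - (x ^ 2 + y ^ 2 - R ^ 2) ^ 2 * b ^ 2
        = ((x ^ 2 + y ^ 2 + R ^ 2) * a - 2 * R ^ 2 * x) ^ 2 := by
      rw [mul_pow, hd1, hd2]; exact keyid x y a b R hab
    have hNb : |x ^ 2 + y ^ 2 - R ^ 2| * b ≤ R * (d1 * d2) := by
      have h1 : (|x ^ 2 + y ^ 2 - R ^ 2| * b) ^ 2 ≤ (R * (d1 * d2)) ^ 2 := by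
        rw [mul_pow, sq_abs]
        nlinarith [sq_nonneg ((x ^ 2 + y ^ 2 + R ^ 2) * a - 2 * R ^ 2 * x)]
      have h2 : 0 ≤ |x ^ 2 + y ^ 2 - R ^ 2| * b := by positivity
      have h3 : 0 ≤ R * (d1 * d2) := by positivity
      calc |x ^ 2 + y ^ 2 - R ^ 2| * b = Real.sqrt ((|x ^ 2 + y ^ 2 - R ^ 2| * b) ^ 2) :=
            (Real.sqrt_sq h2).symm
        _ ≤ Real.sqrt ((R * (d1 * d2)) ^ 2) := Real.sqrt_le_sqrt h1
        _ = R * (d1 * d2) := Real.sqrt_sq h3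
    rw [sinh_dist', hT, hP, ← hd1', ← hd2', ← hyy, ← hb]
    rw [div_le_div_iff₀ (by positivity) (by positivity)]
    have h5 := mul_le_mul_of_nonneg_right hNb hy0.le
    nlinarith [h5]
  -- the minimizing point
  set K : ℝ := x ^ 2 + y ^ 2 + R ^ 2 with hK
  have hK0 : 0 < K := by positivity
  set a0 : ℝ := 2 * R ^ 2 * x / K with ha0
  have hlt : a0 ^ 2 < R ^ 2 := by
    rw [ha0, div_pow, div_lt_iff₀ (by positivity), hK]
    have h1 : 0 < R ^ 2 * (((x - R) ^ 2 + y ^ 2) * ((x + R) ^ 2 + y ^ 2)) := by positivity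
    nlinarith [h1]
  set b0 : ℝ := Real.sqrt (R ^ 2 - a0 ^ 2) with hb0
  have hb00 : 0 < b0 := Real.sqrt_pos.2 (by linarith)
  have hb0sq : b0 ^ 2 = R ^ 2 - a0 ^ 2 := Real.sq_sqrt (by linarith)
  set u0 : ℍ := UpperHalfPlane.mk ((a0 : ℂ) + (b0 : ℂ) * Complex.I) (by simpa using hb00)
    with hu0
  have hu0re : (u0 : ℂ).re = a0 := by simp [hu0]
  have hu0im : u0.im = b0 := by
    show ((a0 : ℂ) + (b0 : ℂ) * Complex.I).im = b0
    simp
  have hu0mem : u0 ∈ ell R := by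
    show ‖(u0 : ℂ)‖ = R
    rw [Complex.norm_def, Complex.normSq_apply, hu0re]
    have : (u0 : ℂ).im = b0 := hu0im
    rw [this]
    have : a0 * a0 + b0 * b0 = R ^ 2 := by rw [← sq, ← sq]; linarith [hb0sq]
    rw [this, Real.sqrt_sq hR.le]
  have hab0 : a0 ^ 2 + b0 ^ 2 = R ^ 2 := by linarith [hb0sq]
  have hu0im' : (u0 : ℂ).im = b0 := hu0im
  have hsinh0 : Real.sinh (dist z u0) = T := by
    rw [sinh_dist']
    set d1 : ℝ := dist (z : ℂ) (u0 : ℂ) with hd1'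
    set d2 : ℝ := dist (z : ℂ) (starRingEnd ℂ (u0 : ℂ)) with hd2'
    have hd1 : d1 ^ 2 = (x - a0) ^ 2 + (y - b0) ^ 2 := by
      rw [hd1', Complex.dist_eq, Complex.sq_norm, Complex.normSq_apply]
      simp only [Complex.sub_re, Complex.sub_im, hzim, hu0re, hu0im']
      ring
    have hd2 : d2 ^ 2 = (x - a0) ^ 2 + (y + b0) ^ 2 := by
      rw [hd2', Complex.dist_eq, Complex.sq_norm, Complex.normSq_apply]
      simp only [Complex.sub_re, Complex.sub_im, Complex.conj_re, Complex.conj_im, hzim,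
        hu0re, hu0im']
      ring
    have hzero : (x ^ 2 + y ^ 2 + R ^ 2) * a0 - 2 * R ^ 2 * x = 0 := by
      rw [ha0, ← hK]; field_simp; ring
    have hkey : R ^ 2 * (d1 * d2) ^ 2 = (x ^ 2 + y ^ 2 - R ^ 2) ^ 2 * b0 ^ 2 := by
      have h6 := keyid x y a0 b0 R hab0
      have h0 : ((x ^ 2 + y ^ 2 + R ^ 2) * a0 - 2 * R ^ 2 * x) ^ 2 = 0 := by
        rw [hzero]; ring
      rw [mul_pow, hd1, hd2]
      linarith [h6, h0]
    have hEq : R * (d1 * d2) = |x ^ 2 + y ^ 2 - R ^ 2| * b0 := by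
      have h2 : 0 ≤ R * (d1 * d2) := by positivity
      have h3 : 0 ≤ |x ^ 2 + y ^ 2 - R ^ 2| * b0 := by positivity
      have h4 : (R * (d1 * d2)) ^ 2 = (|x ^ 2 + y ^ 2 - R ^ 2| * b0) ^ 2 := by
        rw [show (|x ^ 2 + y ^ 2 - R ^ 2| * b0) ^ 2 = (x ^ 2 + y ^ 2 - R ^ 2) ^ 2 * b0 ^ 2 by
          rw [mul_pow, sq_abs]]
        linear_combination hkey
      calc R * (d1 * d2) = Real.sqrt ((R * (d1 * d2)) ^ 2) := (Real.sqrt_sq h2).symm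
        _ = Real.sqrt ((|x ^ 2 + y ^ 2 - R ^ 2| * b0) ^ 2) := by rw [h4]
        _ = |x ^ 2 + y ^ 2 - R ^ 2| * b0 := Real.sqrt_sq h3
    rw [hT, hP, hu0im, ← hyy]
    rw [div_eq_div_iff (by positivity) (by positivity)]
    linear_combination (2 * y) * hEq
  have hne : (ell R).Nonempty := ⟨u0, hu0mem⟩
  have hinf : Metric.infDist z (ell R) = Real.arsinh T := by
    apply le_antisymm
    · have h1 : Metric.infDist z (ell R) ≤ dist z u0 := Metric.infDist_le_dist_of_mem hu0mem
      have h2 : dist z u0 = Real.arsinh T := by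
        have := congrArg Real.arsinh hsinh0
        rwa [Real.arsinh_sinh] at this
      linarith
    · rw [Metric.infDist_eq_iInf]
      have : Nonempty (ell R) := hne.to_subtype
      apply le_ciInf
      intro u
      rw [← Real.arsinh_sinh (dist z u)]
      exact Real.arsinh_le_arsinh.2 (hlow u u.2)
  rw [hinf, Real.sinh_arsinh]
end

section
/- Fix a point z in the hyperbolic upper half-plane ℍ and a constant r > 0. Then, as R → ∞, the quantity (2·r·R/(R² − 1))·sinh(Metric.infDist z ℓ_R) tends to r / Im z. (This identifies the limiting ‘focus/directrix circle’ condition sinh(dist z i) = ε_R·sinh(d(z, ℓ_R)) with ε_R = 2rR/(R²−1) as the equation sinh(dist z i) = r/Im z.) -/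
open UpperHalfPlane

lemma cosh_arsinh_K (x y R : ℝ) (hy : 0 < y) (hR : 0 < R) :
    Real.cosh (Real.arsinh ((R ^ 2 - (x ^ 2 + y ^ 2)) / (2 * R * y))) =
      Real.sqrt ((x ^ 2 + y ^ 2 + R ^ 2) ^ 2 - 4 * R ^ 2 * x ^ 2) / (2 * R * y) := by
  rw [Real.cosh_arsinh]
  have h1 : 1 + ((R ^ 2 - (x ^ 2 + y ^ 2)) / (2 * R * y)) ^ 2 =
      ((x ^ 2 + y ^ 2 + R ^ 2) ^ 2 - 4 * R ^ 2 * x ^ 2) / (2 * R * y) ^ 2 := by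
    field_simp
    ring
  rw [h1, Real.sqrt_div' _ (by positivity), Real.sqrt_sq (by positivity)]

lemma W_pos (x y R : ℝ) (hy : 0 < y) :
    0 < (x ^ 2 + y ^ 2 + R ^ 2) ^ 2 - 4 * R ^ 2 * x ^ 2 := by
  have h : (x ^ 2 + y ^ 2 + R ^ 2) ^ 2 - 4 * R ^ 2 * x ^ 2 =
      ((x - R) ^ 2 + y ^ 2) * ((x + R) ^ 2 + y ^ 2) := by ring
  rw [h]; positivity

theorem infDist_ell (z : ℍ) {R : ℝ} (hR : ‖(z : ℂ)‖ < R) :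
    Metric.infDist z (ell R) =
      Real.arsinh ((R ^ 2 - (z.re ^ 2 + z.im ^ 2)) / (2 * R * z.im)) := by
  set x := z.re with hx
  set y := z.im with hyy
  have hy : 0 < y := z.im_pos
  have hR0 : 0 < R := (norm_nonneg _).trans_lt hR
  have habs2 : ‖(z : ℂ)‖ ^ 2 = x ^ 2 + y ^ 2 := by
    rw [Complex.sq_norm, Complex.normSq_apply, UpperHalfPlane.coe_re, UpperHalfPlane.coe_im]
    ring
  have hc : x ^ 2 + y ^ 2 < R ^ 2 := by
    rw [← habs2]
    exact pow_lt_pow_left₀ hR (norm_nonneg _) two_ne_zero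
  set K := (R ^ 2 - (x ^ 2 + y ^ 2)) / (2 * R * y) with hK
  have hK0 : 0 ≤ K := by
    apply div_nonneg (by linarith) (by positivity)
  set A := x ^ 2 + y ^ 2 + R ^ 2 with hA
  have hApos : 0 < A := by rw [hA]; positivity
  set W := A ^ 2 - 4 * R ^ 2 * x ^ 2 with hWdef
  have hW : 0 < W := by rw [hWdef, hA]; exact W_pos x y R hy
  have hsW : Real.sqrt W ^ 2 = W := Real.sq_sqrt hW.le
  have hsWpos : 0 < Real.sqrt W := Real.sqrt_pos.mpr hW
  have hcoshK : Real.cosh (Real.arsinh K) = Real.sqrt W / (2 * R * y) :=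
    cosh_arsinh_K x y R hy hR0
  -- lower bound: for every u in ell R, arsinh K ≤ dist z u
  have hlow : ∀ u ∈ ell R, Real.arsinh K ≤ dist z u := by
    intro u hu
    have hu' : ‖(u : ℂ)‖ = R := hu
    have hv : 0 < u.im := u.im_pos
    have hav : u.re ^ 2 + u.im ^ 2 = R ^ 2 := by
      rw [← hu', Complex.sq_norm, Complex.normSq_apply, UpperHalfPlane.coe_re,
        UpperHalfPlane.coe_im]
      ring
    set a := u.re
    set v := u.im
    have hcosh : Real.cosh (dist z u) = ((x - a) ^ 2 + y ^ 2 + v ^ 2) / (2 * y * v) := by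
      simpa using UpperHalfPlane.cosh_dist' z u
    have hN : (x - a) ^ 2 + y ^ 2 + v ^ 2 = A - 2 * a * x := by
      rw [hA]; linear_combination hav
    have hNpos : 0 ≤ A - 2 * a * x := by
      rw [hA]; nlinarith [sq_nonneg (x - a), sq_nonneg v, hav]
    -- cosh (arsinh K) ≤ cosh (dist z u)
    have hineq : Real.cosh (Real.arsinh K) ≤ Real.cosh (dist z u) := by
      rw [hcoshK, hcosh, hN]
      rw [div_le_div_iff₀ (by positivity) (by positivity)]
      have hkey : Real.sqrt W * v ≤ R * (A - 2 * a * x) := by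
        have h1 : Real.sqrt W * v = Real.sqrt (W * v ^ 2) := by
          rw [Real.sqrt_mul hW.le, Real.sqrt_sq hv.le]
        rw [h1]
        have h2 : W * v ^ 2 ≤ (R * (A - 2 * a * x)) ^ 2 := by
          have hv2 : v ^ 2 = R ^ 2 - a ^ 2 := by linarith
          have hkey2 : (R * (A - 2 * a * x)) ^ 2 - W * v ^ 2 =
              (a * A - 2 * R ^ 2 * x) ^ 2 := by
            rw [hWdef, hA, hv2]; ring
          linarith [sq_nonneg (a * A - 2 * R ^ 2 * x), hkey2]
        calc Real.sqrt (W * v ^ 2) ≤ Real.sqrt ((R * (A - 2 * a * x)) ^ 2) :=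
              Real.sqrt_le_sqrt h2
          _ = R * (A - 2 * a * x) := Real.sqrt_sq (by positivity)
      have := mul_le_mul_of_nonneg_left hkey (show (0:ℝ) ≤ 2 * y by positivity)
      nlinarith [this]
    have := Real.cosh_le_cosh.mp hineq
    rwa [abs_of_nonneg (Real.arsinh_nonneg_iff.mpr hK0), abs_of_nonneg dist_nonneg] at this
  -- the optimal point
  set a₀ := 2 * R ^ 2 * x / A with ha₀
  set v₀ := R * Real.sqrt W / A with hv₀
  have hv₀pos : 0 < v₀ := by rw [hv₀]; positivity
  have hnum : (R * Real.sqrt W) ^ 2 = R ^ 2 * W := by rw [mul_pow, hsW]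
  have hsum : a₀ ^ 2 + v₀ ^ 2 = R ^ 2 := by
    rw [ha₀, hv₀, div_pow, div_pow, hnum, ← add_div, hWdef]
    field_simp
    ring
  set u₀ : ℍ := UpperHalfPlane.mk ⟨a₀, v₀⟩ hv₀pos with hu₀
  have hu₀re : u₀.re = a₀ := rfl
  have hu₀im : u₀.im = v₀ := rfl
  have hmem : u₀ ∈ ell R := by
    show ‖(u₀ : ℂ)‖ = R
    have hsq : ‖(u₀ : ℂ)‖ ^ 2 = R ^ 2 := by
      rw [Complex.sq_norm, Complex.normSq_apply]
      show a₀ * a₀ + v₀ * v₀ = R ^ 2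
      linear_combination hsum
    calc ‖(u₀ : ℂ)‖ = Real.sqrt (‖(u₀ : ℂ)‖ ^ 2) :=
          (Real.sqrt_sq (norm_nonneg _)).symm
      _ = Real.sqrt (R ^ 2) := by rw [hsq]
      _ = R := Real.sqrt_sq hR0.le
  have hdist : dist z u₀ = Real.arsinh K := by
    have hcosh : Real.cosh (dist z u₀) = ((x - a₀) ^ 2 + y ^ 2 + v₀ ^ 2) / (2 * y * v₀) := by
      exact UpperHalfPlane.cosh_dist' z u₀
    have hNum : (x - a₀) ^ 2 + y ^ 2 + v₀ ^ 2 = A - 2 * a₀ * x := by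
      rw [hA]; linear_combination hsum
    have hWA : A - 2 * a₀ * x = W / A := by
      rw [ha₀, hWdef]; field_simp; ring
    have hval : ((x - a₀) ^ 2 + y ^ 2 + v₀ ^ 2) / (2 * y * v₀) = Real.sqrt W / (2 * R * y) := by
      rw [hNum, hWA, hv₀]
      rw [div_eq_div_iff (by rw [← hv₀]; positivity) (by positivity)]
      field_simp
      exact hsW.symm
    have hcosh2 : Real.cosh (dist z u₀) = Real.cosh (Real.arsinh K) := by
      rw [hcosh, hval, hcoshK]
    have h := Real.cosh_le_cosh.mp hcosh2.le
    have h' := Real.cosh_le_cosh.mp hcosh2.ge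
    rw [abs_of_nonneg dist_nonneg, abs_of_nonneg (Real.arsinh_nonneg_iff.mpr hK0)] at h h'
    linarith
  refine le_antisymm ?_ ?_
  · calc Metric.infDist z (ell R) ≤ dist z u₀ := Metric.infDist_le_dist_of_mem hmem
      _ = Real.arsinh K := hdist
  · by_contra hlt
    push_neg at hlt
    obtain ⟨u, hu, hud⟩ := (Metric.infDist_lt_iff ⟨u₀, hmem⟩).mp hlt
    exact absurd hud (not_lt.mpr (hlow u hu))

/-- As `R → ∞`, `(2rR/(R²−1))·sinh(d(z, ℓ_R)) → r / Im z`. -/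
theorem stmt4 (z : ℍ) (r : ℝ) (hr : 0 < r) :
    Filter.Tendsto
      (fun R : ℝ => (2 * r * R / (R ^ 2 - 1)) * Real.sinh (Metric.infDist z (ell R)))
      Filter.atTop (nhds (r / z.im)) := by
  set x := z.re
  set y := z.im
  have hy : 0 < y := z.im_pos
  set c := x ^ 2 + y ^ 2 with hc
  have hmain : Filter.Tendsto (fun R : ℝ => r / y * ((R ^ 2 - c) / (R ^ 2 - 1)))
      Filter.atTop (nhds (r / y * 1)) := by
    apply Filter.Tendsto.const_mul
    have h1 : Filter.Tendsto (fun R : ℝ => (1 - c / R ^ 2) / (1 - 1 / R ^ 2))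
        Filter.atTop (nhds ((1 - 0) / (1 - 0))) := by
      apply Filter.Tendsto.div
      · exact tendsto_const_nhds.sub (tendsto_const_nhds.div_atTop
          (Filter.tendsto_pow_atTop two_ne_zero))
      · exact tendsto_const_nhds.sub (tendsto_const_nhds.div_atTop
          (Filter.tendsto_pow_atTop two_ne_zero))
      · norm_num
    norm_num at h1
    apply h1.congr'
    filter_upwards [Filter.eventually_gt_atTop 1] with R hR1
    have h2 : R ^ 2 - 1 ≠ 0 := by nlinarith
    have h3 : (R : ℝ) ≠ 0 := by positivity
    field_simp
  rw [mul_one] at hmain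
  apply hmain.congr'
  filter_upwards [Filter.eventually_gt_atTop (max 1 (‖(z : ℂ)‖))] with R hRb
  have hR1 : 1 < R := (le_max_left _ _).trans_lt hRb
  have hRz : ‖(z : ℂ)‖ < R := (le_max_right _ _).trans_lt hRb
  have hR0 : 0 < R := by linarith
  rw [infDist_ell z hRz, Real.sinh_arsinh]
  have h2 : R ^ 2 - 1 ≠ 0 := by nlinarith
  field_simp
  ring
end

section
/- For every r > 0, the curve {z ∈ ℍ : |z² + 1| = 2r} in the hyperbolic upper half-plane (the ‘circle’ of the focus/directrix definition, with focus i) is not a hyperbolic metric circle: there do not exist a center c ∈ ℍ and a radius ρ > 0 such that {z ∈ ℍ : |z² + 1| = 2r} = {z ∈ ℍ : dist z c = ρ}. -/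
open UpperHalfPlane

private lemma abs_eq_of_normSq {w : ℂ} {R : ℝ} (hR : 0 ≤ R) (h : Complex.normSq w = R ^ 2) :
    ‖w‖ = R := by
  rw [Complex.norm_def, h, Real.sqrt_sq hR]

private lemma normSq_formula (x y : ℝ) :
    Complex.normSq ((⟨x, y⟩ : ℂ) ^ 2 + 1) = (x ^ 2 - y ^ 2 + 1) ^ 2 + (2 * x * y) ^ 2 := by
  simp [Complex.normSq_apply, pow_two, Complex.add_re, Complex.add_im, Complex.mul_re,
    Complex.mul_im]
  ring

/-- On a hyperbolic circle, points satisfy a Euclidean circle equation. -/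
private lemma circle_eq (c : ℍ) (ρ : ℝ) (x y : ℝ) (hy : 0 < y)
    (hd : dist (UpperHalfPlane.mk ⟨x, y⟩ hy) c = ρ) :
    (x - (c : ℂ).re) ^ 2 + (y - c.im) ^ 2 = (Real.cosh ρ - 1) * (2 * y * c.im) := by
  have hc := UpperHalfPlane.cosh_dist (UpperHalfPlane.mk ⟨x, y⟩ hy) c
  rw [hd] at hc
  have him : (UpperHalfPlane.mk ⟨x, y⟩ hy).im = y := rfl
  have hdsq : dist ((⟨x, y⟩ : ℂ)) (c : ℂ) ^ 2 =
      (x - (c : ℂ).re) ^ 2 + (y - c.im) ^ 2 := by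
    rw [Complex.dist_eq_re_im, Real.sq_sqrt (by positivity)]
    rfl
  rw [him] at hc
  have hcoe : ((UpperHalfPlane.mk ⟨x, y⟩ hy : ℍ) : ℂ) = (⟨x, y⟩ : ℂ) := rfl
  rw [hcoe, hdsq] at hc
  have hb0 : 0 < c.im := c.im_pos
  have hyb : (0:ℝ) < 2 * y * c.im := by positivity
  field_simp at hc
  rw [UpperHalfPlane.coe_re] at hc ⊢
  linarith [hc]

private lemma case_small (r : ℝ) (hr : 0 < r) (hcase : 2 * r < 1) (a b K : ℝ) (hb0 : 0 < b)
    (key : ∀ (x y : ℝ), 0 < y →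
      ‖((⟨x, y⟩ : ℂ)) ^ 2 + 1‖ = 2 * r →
      (x - a) ^ 2 + (y - b) ^ 2 = K * (2 * y * b)) : False := by
  set s := Real.sqrt (1 + 2 * r) with hs
  set t := Real.sqrt (1 - 2 * r) with ht
  set m := Real.sqrt (1 - r ^ 2) with hm
  have hs2 : s ^ 2 = 1 + 2 * r := Real.sq_sqrt (by linarith)
  have ht2 : t ^ 2 = 1 - 2 * r := Real.sq_sqrt (by linarith)
  have hm2 : m ^ 2 = 1 - r ^ 2 := Real.sq_sqrt (by nlinarith)
  have hs0 : 0 < s := Real.sqrt_pos.mpr (by linarith)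
  have ht0 : 0 < t := Real.sqrt_pos.mpr (by linarith)
  have hm0 : 0 < m := Real.sqrt_pos.mpr (by nlinarith)
  have hst : t < s := by nlinarith
  have E1 := key 0 s hs0 (abs_eq_of_normSq (by linarith)
    (by rw [normSq_formula]; linear_combination (s ^ 2 - 1 + 2 * r) * hs2))
  have E2 := key 0 t ht0 (abs_eq_of_normSq (by linarith)
    (by rw [normSq_formula]; linear_combination (t ^ 2 - 1 - 2 * r) * ht2))
  have E3 := key r m hm0 (abs_eq_of_normSq (by linarith)
    (by rw [normSq_formula]; linear_combination (m ^ 2 - 1 + r ^ 2) * hm2))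
  have E4 := key (-r) m hm0 (abs_eq_of_normSq (by linarith)
    (by rw [normSq_formula]; linear_combination (m ^ 2 - 1 + r ^ 2) * hm2))
  have h0 : r * a = 0 := by nlinarith [E3, E4]
  have ha0 : a = 0 := by
    rcases mul_eq_zero.mp h0 with h | h
    · exact absurd h (ne_of_gt hr)
    · exact h
  rw [ha0] at E1 E2 E3
  have hL : K * (2 * b) = s + t - 2 * b := by
    have hne : s - t ≠ 0 := by linarith
    have h12 : (s - t) * (K * (2 * b)) = (s - t) * (s + t - 2 * b) := by
      linear_combination E2 - E1
    exact mul_left_cancel₀ hne h12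
  have hbst : b ^ 2 = s * t := by linear_combination E1 + s * hL
  have hmst : 1 + s * t = (s + t) * m := by linear_combination E3 + m * hL - hm2 - hbst
  have h1 : (1 + s * t) ^ 2 = (2 + 2 * (s * t)) * (1 - r ^ 2) := by
    linear_combination (1 + s * t + (s + t) * m) * hmst + (s + t) ^ 2 * hm2 +
      (1 - r ^ 2) * hs2 + (1 - r ^ 2) * ht2
  have hfac : (1 + s * t) * (s * t - 1 + 2 * r ^ 2) = 0 := by linear_combination h1
  have hstpos : 0 < s * t := by positivity
  have h2 : s * t = 1 - 2 * r ^ 2 := by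
    rcases mul_eq_zero.mp hfac with h | h
    · linarith
    · linarith
  have h3 : (s * t) ^ 2 = (1 + 2 * r) * (1 - 2 * r) := by rw [mul_pow, hs2, ht2]
  rw [h2] at h3
  nlinarith [h3, pow_pos hr 4]

private lemma case_large (r : ℝ) (hr : 0 < r) (hcase : 1 ≤ 2 * r) (ρ : ℝ) (hρ : 0 < ρ) (c : ℍ)
    (hset : {z : ℍ | ‖(z : ℂ) ^ 2 + 1‖ = 2 * r} = {z : ℍ | dist z c = ρ}) :
    False := by
  set b := c.im with hb
  have hb0 : 0 < b := c.im_pos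
  set y := min 1 (b * Real.exp (-(ρ + 1))) with hy
  have hy0 : 0 < y := lt_min one_pos (by positivity)
  have hy1 : y ≤ 1 := min_le_left _ _
  set q := Real.sqrt (y ^ 2 + r ^ 2) with hq
  have hq2 : q ^ 2 = y ^ 2 + r ^ 2 := Real.sq_sqrt (by positivity)
  have hq0 : 0 ≤ q := Real.sqrt_nonneg _
  have h4a : 1 ≤ 4 * r ^ 2 := by nlinarith [hcase, hr]
  have h4c : y ^ 2 ≤ 1 := by nlinarith [hy0, hy1]
  have h4b : y ^ 4 ≤ y ^ 2 := by nlinarith [h4c, sq_nonneg y]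
  have h4 : (1 + y ^ 2) ^ 2 ≤ (2 * q) ^ 2 := by nlinarith [hq2, h4a, h4b]
  have hqge : 1 + y ^ 2 ≤ 2 * q := by nlinarith [h4, hq0, hy0]
  set X := 2 * q - 1 - y ^ 2 with hX
  have hX0 : 0 ≤ X := by linarith
  set x := Real.sqrt X with hx
  have hx2 : x ^ 2 = X := Real.sq_sqrt hX0
  have hmem : ‖((⟨x, y⟩ : ℂ)) ^ 2 + 1‖ = 2 * r :=
    abs_eq_of_normSq (by linarith)
      (by rw [normSq_formula]
          linear_combination (2 * q + 1 + y ^ 2 + x ^ 2) * hx2 + 4 * hq2)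
  have hp : (UpperHalfPlane.mk ⟨x, y⟩ hy0) ∈
      {z : ℍ | ‖(z : ℂ) ^ 2 + 1‖ = 2 * r} := hmem
  rw [hset] at hp
  have hd : dist (UpperHalfPlane.mk ⟨x, y⟩ hy0) c = ρ := hp
  have hlog := UpperHalfPlane.dist_log_im_le (UpperHalfPlane.mk ⟨x, y⟩ hy0) c
  rw [hd] at hlog
  have him : (UpperHalfPlane.mk ⟨x, y⟩ hy0).im = y := rfl
  rw [him] at hlog
  have hyle : y ≤ b * Real.exp (-(ρ + 1)) := min_le_right _ _
  have hlogy : Real.log y ≤ Real.log b - (ρ + 1) := by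
    have h5 := Real.log_le_log hy0 hyle
    rwa [Real.log_mul (ne_of_gt hb0) (Real.exp_ne_zero _), Real.log_exp] at h5
  have habs : Real.log b - Real.log y ≤ dist (Real.log y) (Real.log b) := by
    rw [Real.dist_eq, abs_sub_comm]
    exact le_abs_self _
  linarith

/-- The focus/directrix ‘circle’ `{z : |z² + 1| = 2r}` is not a hyperbolic metric circle. -/
theorem stmt5 (r : ℝ) (hr : 0 < r) :
    ¬ ∃ (c : ℍ) (ρ : ℝ), 0 < ρ ∧
      {z : ℍ | ‖(z : ℂ) ^ 2 + 1‖ = 2 * r} = {z : ℍ | dist z c = ρ} := by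
  rintro ⟨c, ρ, hρ, hset⟩
  by_cases hcase : 2 * r < 1
  · refine case_small r hr hcase ((c : ℂ).re) c.im (Real.cosh ρ - 1) c.im_pos ?_
    intro x y hy hmem
    have hp : (UpperHalfPlane.mk ⟨x, y⟩ hy) ∈
        {z : ℍ | ‖(z : ℂ) ^ 2 + 1‖ = 2 * r} := hmem
    rw [hset] at hp
    exact circle_eq c ρ x y hy hp
  · exact case_large r hr (by linarith) ρ hρ c hset
end

section
/- Let b > 0 and c ∈ ℝ. For a point z = x + iy in the hyperbolic upper half-plane ℍ, the two-focus ellipse condition dist z i + dist z (bi) = c holds if and only if (x² + y² + 1 + √((x² − y² + 1)² + 4x²y²)) · (x² + y² + b² + √((x² − y² + b²)² + 4x²y²)) = 4·b·e^c·y². -/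
open UpperHalfPlane

lemma exp_dist_vpt (z : ℍ) (t : ℝ) (ht : 0 < t) :
    Real.exp (dist z (vpt t ht)) =
      (z.re ^ 2 + z.im ^ 2 + t ^ 2 +
        Real.sqrt ((z.re ^ 2 - z.im ^ 2 + t ^ 2) ^ 2 + 4 * z.re ^ 2 * z.im ^ 2)) /
      (2 * t * z.im) := by
  have him : (vpt t ht).im = t := by simp [vpt, UpperHalfPlane.im, UpperHalfPlane.mk]
  rw [UpperHalfPlane.dist_eq, him, two_mul, Real.exp_add, ← sq, Real.exp_arsinh]
  set x := z.re with hxdef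
  set y := z.im with hydef
  have hy : 0 < y := z.im_pos
  have hyt : (0:ℝ) < y * t := mul_pos hy ht
  set D : ℝ := dist (z : ℂ) ((vpt t ht : ℍ) : ℂ) with hD
  have hDnn : 0 ≤ D := dist_nonneg
  have hD2 : D ^ 2 = x ^ 2 + (y - t) ^ 2 := by
    rw [hD, Complex.dist_eq, Complex.sq_norm, Complex.normSq_apply]
    simp [vpt, UpperHalfPlane.coe_mk, x, y, UpperHalfPlane.coe_re, UpperHalfPlane.coe_im]
    ring
  set E : ℝ := Real.sqrt (x ^ 2 + (y + t) ^ 2) with hE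
  have hEnn : 0 ≤ E := Real.sqrt_nonneg _
  have hE2 : E ^ 2 = x ^ 2 + (y + t) ^ 2 := Real.sq_sqrt (by positivity)
  have hs : Real.sqrt (y * t) ^ 2 = y * t := Real.sq_sqrt hyt.le
  have hsp : 0 < Real.sqrt (y * t) := Real.sqrt_pos.2 hyt
  have hDE : D * E = Real.sqrt ((x ^ 2 - y ^ 2 + t ^ 2) ^ 2 + 4 * x ^ 2 * y ^ 2) := by
    rw [← Real.sqrt_sq hDnn, ← Real.sqrt_sq hEnn, ← Real.sqrt_mul (sq_nonneg _), hD2, hE2]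
    congr 1
    ring
  have h1 : 1 + (D / (2 * Real.sqrt (y * t))) ^ 2 =
      (x ^ 2 + (y + t) ^ 2) / (2 * Real.sqrt (y * t)) ^ 2 := by
    rw [div_pow, mul_pow, hs, hD2]
    field_simp
    ring
  have h2 : Real.sqrt ((x ^ 2 + (y + t) ^ 2) / (2 * Real.sqrt (y * t)) ^ 2) =
      E / (2 * Real.sqrt (y * t)) := by
    rw [Real.sqrt_div (by positivity), Real.sqrt_sq (by positivity)]
  rw [h1, h2, ← add_div, div_pow, mul_pow, hs,
    div_eq_div_iff (by positivity) (by positivity)]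
  linear_combination (2 * t * y) * hD2 + (2 * t * y) * hE2 + (4 * t * y) * hDE

lemma I_eq_vpt : UpperHalfPlane.I = vpt 1 one_pos := by
  apply UpperHalfPlane.ext
  simp [vpt, UpperHalfPlane.I, UpperHalfPlane.mk]

/-- Algebraic form of the two-focus ellipse condition `dist z i + dist z (bi) = c`. -/
theorem stmt6 (b : ℝ) (hb : 0 < b) (c : ℝ) (z : ℍ) (x y : ℝ)
    (hx : x = z.re) (hy : y = z.im) :
    dist z UpperHalfPlane.I + dist z (vpt b hb) = c ↔
      (x ^ 2 + y ^ 2 + 1 + Real.sqrt ((x ^ 2 - y ^ 2 + 1) ^ 2 + 4 * x ^ 2 * y ^ 2)) *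
        (x ^ 2 + y ^ 2 + b ^ 2 + Real.sqrt ((x ^ 2 - y ^ 2 + b ^ 2) ^ 2 + 4 * x ^ 2 * y ^ 2)) =
      4 * b * Real.exp c * y ^ 2 := by
  subst hx hy
  have hy : 0 < z.im := z.im_pos
  rw [← Real.exp_eq_exp (x := _) (y := c), Real.exp_add, I_eq_vpt,
    exp_dist_vpt z 1 one_pos, exp_dist_vpt z b hb]
  rw [div_mul_div_comm, div_eq_iff (by positivity)]
  norm_num
  constructor <;> intro h <;> linear_combination h
end

section
/- Let r > 1 and let ε satisfy 1/r < ε < 1. Then the focus/directrix ellipse {z ∈ ℍ : sinh(dist z i) = ε·sinh(Metric.infDist z ℓ_r)} with focus i and directrix ℓ_r is not a compact subset of ℍ (the curve runs off to the ideal boundary). -/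
open UpperHalfPlane

lemma sinh_dist_eq' (z w : ℍ) :
    Real.sinh (dist z w) = Real.sqrt (Real.cosh (dist z w) ^ 2 - 1) := by
  rw [show Real.cosh (dist z w) ^ 2 - 1 = Real.sinh (dist z w) ^ 2 by
    rw [Real.cosh_sq]; ring]
  rw [Real.sqrt_sq (Real.sinh_nonneg_iff.2 dist_nonneg)]

lemma cosh_dist'' (z w : ℍ) :
    Real.cosh (dist z w) = 1 + ((z.re - w.re) ^ 2 + (z.im - w.im) ^ 2) / (2 * z.im * w.im) := by
  rw [UpperHalfPlane.cosh_dist, Complex.dist_eq, Complex.sq_norm, Complex.normSq_apply]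
  norm_num [UpperHalfPlane.coe_re, UpperHalfPlane.coe_im]
  ring_nf

lemma vpt_re (t : ℝ) (ht : 0 < t) : (vpt t ht).re = 0 := by
  simp [vpt, UpperHalfPlane.mk_re]

lemma vpt_im (t : ℝ) (ht : 0 < t) : (vpt t ht).im = t := by
  simp [vpt, UpperHalfPlane.mk_im]

lemma vpt_mem_ell (t : ℝ) (ht : 0 < t) : vpt t ht ∈ ell t := by
  simp [ell, vpt, UpperHalfPlane.coe_mk, _root_.abs_of_pos ht]

/-- Lower bound on the sinh of the distance to the geodesic `ℓ_r`, for a point on the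
imaginary axis below it. -/
lemma ell_lower (r y : ℝ) (hr : 1 < r) (hy : 0 < y) (hyr : y < r) (z : ℍ)
    (hre : z.re = 0) (him : z.im = y) :
    (r ^ 2 - y ^ 2) / (2 * y * r) ≤ Real.sinh (Metric.infDist z (ell r)) := by
  have hr0 : (0 : ℝ) < r := by linarith
  have hne : (ell r).Nonempty := ⟨vpt r hr0, vpt_mem_ell r hr0⟩
  have htgt0 : (0 : ℝ) ≤ (r ^ 2 - y ^ 2) / (2 * y * r) :=
    div_nonneg (by nlinarith) (by positivity)
  set c := Real.arsinh ((r ^ 2 - y ^ 2) / (2 * y * r)) with hc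
  have key : ∀ w ∈ ell r, c ≤ dist z w := by
    intro w hw
    have hw2 : w.re ^ 2 + w.im ^ 2 = r ^ 2 := by
      have h2 : ‖(w : ℂ)‖ ^ 2 = r ^ 2 := by rw [hw]
      rw [Complex.sq_norm, Complex.normSq_apply] at h2
      simpa [pow_two] using h2
    have hwim : 0 < w.im := w.im_pos
    have hwimr : w.im ≤ r := by nlinarith [sq_nonneg w.re]
    have hcosh : (r ^ 2 + y ^ 2) / (2 * y * r) ≤ Real.cosh (dist z w) := by
      rw [cosh_dist'', hre, him]
      have e1 : 1 + ((0 - w.re) ^ 2 + (y - w.im) ^ 2) / (2 * y * w.im)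
          = (r ^ 2 + y ^ 2) / (2 * y * w.im) := by
        field_simp
        linear_combination hw2
      rw [e1]
      gcongr
    have hsinh : (r ^ 2 - y ^ 2) / (2 * y * r) ≤ Real.sinh (dist z w) := by
      rw [sinh_dist_eq']
      rw [show (r ^ 2 - y ^ 2) / (2 * y * r)
          = Real.sqrt (((r ^ 2 - y ^ 2) / (2 * y * r)) ^ 2) from (Real.sqrt_sq htgt0).symm]
      apply Real.sqrt_le_sqrt
      have hcp : (0 : ℝ) ≤ (r ^ 2 + y ^ 2) / (2 * y * r) := by positivity
      have h2 : ((r ^ 2 + y ^ 2) / (2 * y * r)) ^ 2 ≤ Real.cosh (dist z w) ^ 2 := by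
        apply pow_le_pow_left₀ hcp hcosh
      have hid : ((r ^ 2 + y ^ 2) / (2 * y * r)) ^ 2 - 1
          = ((r ^ 2 - y ^ 2) / (2 * y * r)) ^ 2 := by
        field_simp
        ring
      linarith
    have := Real.arsinh_le_arsinh.2 hsinh
    rwa [Real.arsinh_sinh] at this
  have hinf : c ≤ Metric.infDist z (ell r) := by
    by_contra h
    push_neg at h
    obtain ⟨w, hw, hd⟩ := (Metric.infDist_lt_iff hne).1 h
    exact absurd hd (not_lt.2 (key w hw))
  calc (r ^ 2 - y ^ 2) / (2 * y * r) = Real.sinh c := (Real.sinh_arsinh _).symm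
    _ ≤ Real.sinh (Metric.infDist z (ell r)) := Real.sinh_le_sinh.2 hinf

/-- Value of `sinh (dist z i)` for a point on the imaginary axis below `i`. -/
lemma focus_val (y : ℝ) (hy : 0 < y) (hy1 : y ≤ 1) (z : ℍ)
    (hre : z.re = 0) (him : z.im = y) :
    Real.sinh (dist z UpperHalfPlane.I) = (1 - y ^ 2) / (2 * y) := by
  rw [sinh_dist_eq', cosh_dist'', hre, him, UpperHalfPlane.I_re, UpperHalfPlane.I_im]
  have e : (1 + ((0 - 0) ^ 2 + (y - 1) ^ 2) / (2 * y * 1)) ^ 2 - 1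
      = ((1 - y ^ 2) / (2 * y)) ^ 2 := by
    field_simp
    ring
  rw [e, Real.sqrt_sq (div_nonneg (by nlinarith) (by positivity))]

set_option maxHeartbeats 1000000 in
/-- On each low horizontal line there is a point where the focus term beats the
directrix term. -/
lemma pos_pt (r ε y : ℝ) (hr : 1 < r) (hε1 : 1 / r < ε) (hε2 : ε < 1)
    (hy : 0 < y) (hy1 : y < 1) :
    ∃ x : ℝ, 0 ≤ x ∧ ∀ z : ℍ, z.re = x → z.im = y →
      ε * Real.sinh (Metric.infDist z (ell r)) < Real.sinh (dist z UpperHalfPlane.I) := by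
  have hr0 : (0 : ℝ) < r := by linarith
  have hε0 : (0 : ℝ) < ε := lt_trans (div_pos one_pos hr0) hε1
  have hrε : (0 : ℝ) < r - ε := by linarith
  obtain ⟨M, hMdef⟩ : ∃ M : ℝ, M = (3 + r / (2 * y)) * r / (r - ε) := ⟨_, rfl⟩
  have hM0 : (0 : ℝ) < M := by
    rw [hMdef]; exact div_pos (mul_pos (by positivity) hr0) hrε
  have hMe : M * (r - ε) = (3 + r / (2 * y)) * r := by
    rw [hMdef, div_mul_cancel₀ _ (ne_of_gt hrε)]
  refine ⟨Real.sqrt (2 * y * M), Real.sqrt_nonneg _, ?_⟩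
  intro z hre him
  have hx2 : z.re ^ 2 = 2 * y * M := by
    rw [hre, Real.sq_sqrt (by positivity)]
  have h1 : Metric.infDist z (ell r) ≤ dist z (vpt r hr0) :=
    Metric.infDist_le_dist_of_mem (vpt_mem_ell r hr0)
  have h2 : ε * Real.sinh (Metric.infDist z (ell r))
      ≤ ε * Real.sinh (dist z (vpt r hr0)) :=
    mul_le_mul_of_nonneg_left (Real.sinh_le_sinh.2 h1) hε0.le
  obtain ⟨A, hAdef⟩ : ∃ A : ℝ, A = Real.cosh (dist z UpperHalfPlane.I) := ⟨_, rfl⟩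
  obtain ⟨B, hBdef⟩ : ∃ B : ℝ, B = Real.cosh (dist z (vpt r hr0)) := ⟨_, rfl⟩
  have hz2 : (z.re - 0) ^ 2 = 2 * y * M := by rw [sub_zero, hx2]
  have hA : 1 + M ≤ A := by
    rw [hAdef, cosh_dist'', him, UpperHalfPlane.I_re, UpperHalfPlane.I_im, hz2]
    have : M ≤ (2 * y * M + (y - 1) ^ 2) / (2 * y * 1) := by
      rw [le_div_iff₀ (by positivity)]
      nlinarith [sq_nonneg (y - 1)]
    linarith
  have hB : ε * B ≤ M - 2 := by
    have hBval : B = 1 + (2 * y * M + (y - r) ^ 2) / (2 * y * r) := by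
      rw [hBdef, cosh_dist'', him, vpt_re, vpt_im, hz2]
    rw [hBval, ← sub_nonneg]
    have hyr2 : (y - r) ^ 2 ≤ r ^ 2 := by nlinarith
    have h2y : (0 : ℝ) < 2 * y := by positivity
    rw [show M - 2 - ε * (1 + (2 * y * M + (y - r) ^ 2) / (2 * y * r))
        = ((M - 2 - ε) * (2 * y * r) - ε * (2 * y * M + (y - r) ^ 2)) / (2 * y * r) by
      field_simp; ring]
    apply div_nonneg _ (by positivity)
    have hMe2 : 2 * y * (M * (r - ε)) = 6 * y * r + r ^ 2 := by
      rw [hMe]; field_simp; ring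
    have hc1 : (2 + ε) * (2 * y * r) ≤ 6 * y * r := by nlinarith [mul_pos hy hr0]
    have hc2 : ε * (y - r) ^ 2 ≤ r ^ 2 := by nlinarith [sq_nonneg (y - r)]
    have expand : (M - 2 - ε) * (2 * y * r) - ε * (2 * y * M + (y - r) ^ 2)
        = 2 * y * (M * (r - ε)) - (2 + ε) * (2 * y * r) - ε * (y - r) ^ 2 := by ring
    rw [expand, hMe2]
    linarith [hc1, hc2]
  have hA1 : (1 : ℝ) ≤ A := hAdef ▸ Real.one_le_cosh _
  have hB1 : (1 : ℝ) ≤ B := hBdef ▸ Real.one_le_cosh _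
  have hεB : 0 ≤ ε * B := mul_nonneg hε0.le (by linarith)
  have hAB : ε * B + 1 < A := by linarith
  calc ε * Real.sinh (Metric.infDist z (ell r))
      ≤ ε * Real.sinh (dist z (vpt r hr0)) := h2
    _ = ε * Real.sqrt (B ^ 2 - 1) := by rw [sinh_dist_eq', ← hBdef]
    _ = Real.sqrt (ε ^ 2 * (B ^ 2 - 1)) := by
        rw [Real.sqrt_mul (sq_nonneg ε), Real.sqrt_sq hε0.le]
    _ < Real.sqrt (A ^ 2 - 1) := by
        have hBB : (0:ℝ) ≤ B ^ 2 - 1 := by nlinarith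
        apply Real.sqrt_lt_sqrt (mul_nonneg (sq_nonneg ε) hBB)
        have h3 : (ε * B + 1) ^ 2 < A ^ 2 := by
          apply pow_lt_pow_left₀ hAB (by linarith)
          norm_num
        nlinarith [h3, sq_nonneg ε]
    _ = Real.sinh (dist z UpperHalfPlane.I) := by rw [sinh_dist_eq', hAdef]

set_option maxHeartbeats 1000000 in
/-- For `1/r < ε < 1` (with `r > 1`), the focus/directrix ellipse is not compact. -/
theorem stmt9 (r ε : ℝ) (hr : 1 < r) (hε1 : 1 / r < ε) (hε2 : ε < 1) :
    ¬ IsCompact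
      {z : ℍ | Real.sinh (dist z UpperHalfPlane.I) = ε * Real.sinh (Metric.infDist z (ell r))} := by
  intro hS
  have hr0 : (0 : ℝ) < r := by linarith
  have hε0 : (0 : ℝ) < ε := lt_trans (div_pos one_pos hr0) hε1
  have hεr : 1 < ε * r := by
    rw [div_lt_iff₀ hr0] at hε1
    linarith
  have key : ∀ y : ℝ, 0 < y → y < 1 → ∃ z : ℍ, z.im = y ∧
      Real.sinh (dist z UpperHalfPlane.I) = ε * Real.sinh (Metric.infDist z (ell r)) := by
    intro y hy hy1
    have him : ∀ x : ℝ, 0 < ((x : ℂ) + y * Complex.I).im := by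
      intro x; simp [hy]
    let p : ℝ → ℍ := fun x => UpperHalfPlane.mk ((x : ℂ) + y * Complex.I) (him x)
    have hpre : ∀ x, (p x).re = x := by
      intro x; simp [p, UpperHalfPlane.mk_re]
    have hpim : ∀ x, (p x).im = y := by
      intro x; simp [p, UpperHalfPlane.mk_im]
    have hpc : Continuous p := by
      rw [UpperHalfPlane.isEmbedding_coe.continuous_iff]
      have : (((↑) : ℍ → ℂ) ∘ p) = fun x : ℝ => (x : ℂ) + y * Complex.I := rfl
      rw [this]
      exact Complex.continuous_ofReal.add continuous_const
    let φ : ℝ → ℝ := fun x => Real.sinh (dist (p x) UpperHalfPlane.I)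
        - ε * Real.sinh (Metric.infDist (p x) (ell r))
    have hφc : Continuous φ := by
      apply Continuous.sub
      · exact Real.continuous_sinh.comp ((continuous_id.dist continuous_const).comp hpc)
      · exact continuous_const.mul
          (Real.continuous_sinh.comp ((Metric.continuous_infDist_pt (ell r)).comp hpc))
    have hφ0 : φ 0 < 0 := by
      have hf := focus_val y hy hy1.le (p 0) (hpre 0) (hpim 0)
      have hl := ell_lower r y hr hy (by linarith) (p 0) (hpre 0) (hpim 0)
      have hstrict : (1 - y ^ 2) / (2 * y) < ε * ((r ^ 2 - y ^ 2) / (2 * y * r)) := by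
        rw [show ε * ((r ^ 2 - y ^ 2) / (2 * y * r)) = ε * (r ^ 2 - y ^ 2) / (2 * y * r) by ring]
        rw [div_lt_div_iff₀ (by positivity) (by positivity)]
        nlinarith [mul_pos hy (mul_pos hr0 (show (0:ℝ) < ε * r - 1 by linarith)),
          mul_nonneg (mul_nonneg hy.le (sq_nonneg y)) (show (0:ℝ) ≤ r - ε by linarith)]
      have hmul : ε * ((r ^ 2 - y ^ 2) / (2 * y * r))
          ≤ ε * Real.sinh (Metric.infDist (p 0) (ell r)) :=
        mul_le_mul_of_nonneg_left hl hε0.le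
      show Real.sinh (dist (p 0) UpperHalfPlane.I)
          - ε * Real.sinh (Metric.infDist (p 0) (ell r)) < 0
      rw [hf]
      linarith
    obtain ⟨X, hX0, hXpos⟩ := pos_pt r ε y hr hε1 hε2 hy hy1
    have hφX : 0 < φ X := by
      have := hXpos (p X) (hpre X) (hpim X)
      show (0:ℝ) < Real.sinh (dist (p X) UpperHalfPlane.I)
          - ε * Real.sinh (Metric.infDist (p X) (ell r))
      linarith
    have hIcc : (0 : ℝ) ∈ Set.Icc (φ 0) (φ X) := ⟨hφ0.le, hφX.le⟩
    obtain ⟨x, _, hφx⟩ := intermediate_value_Icc hX0 hφc.continuousOn hIcc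
    refine ⟨p x, hpim x, ?_⟩
    have : Real.sinh (dist (p x) UpperHalfPlane.I)
        - ε * Real.sinh (Metric.infDist (p x) (ell r)) = 0 := hφx
    linarith
  obtain ⟨z₁, _, hz₁⟩ := key (1 / 2) (by norm_num) (by norm_num)
  have hne : Set.Nonempty {z : ℍ |
      Real.sinh (dist z UpperHalfPlane.I) = ε * Real.sinh (Metric.infDist z (ell r))} := ⟨z₁, hz₁⟩
  obtain ⟨z₀, hz₀S, hmin⟩ := hS.exists_isMinOn hne UpperHalfPlane.continuous_im.continuousOn
  have hz₀ : 0 < z₀.im := z₀.im_pos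
  obtain ⟨w, hwim, hwS⟩ := key (min (z₀.im / 2) (1 / 2))
    (lt_min (by linarith) (by norm_num))
    (lt_of_le_of_lt (min_le_right _ _) (by norm_num))
  have h1 : z₀.im ≤ w.im := hmin hwS
  have h2 : min (z₀.im / 2) (1 / 2) ≤ z₀.im / 2 := min_le_left _ _
  rw [hwim] at h1
  linarith
end

section
/- Let r > 0. For a point z = x + iy in the hyperbolic upper half-plane ℍ, the focus/directrix parabola condition dist z i = Metric.infDist z ℓ_r (eccentricity ε = 1, focus i, directrix ℓ_r) holds if and only if 1 − r² + 4x² + (1 − 1/r²)·(x² + y²)² = 0. -/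
open UpperHalfPlane

lemma cosh_inj_nonneg {a b : ℝ} (ha : 0 ≤ a) (hb : 0 ≤ b)
    (h : Real.cosh a = Real.cosh b) : a = b := by
  have h1 : |a| ≤ |b| := Real.cosh_le_cosh.mp h.le
  have h2 : |b| ≤ |a| := Real.cosh_le_cosh.mp h.ge
  rw [abs_of_nonneg ha, abs_of_nonneg hb] at h1 h2
  linarith

lemma cosh_dist_formula (z u : ℍ) :
    Real.cosh (dist z u) =
      1 + ((z.re - u.re) ^ 2 + (z.im - u.im) ^ 2) / (2 * z.im * u.im) := by
  rw [UpperHalfPlane.cosh_dist, Complex.dist_eq_re_im, Real.sq_sqrt (by positivity),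
    UpperHalfPlane.coe_re, UpperHalfPlane.coe_im, UpperHalfPlane.coe_re, UpperHalfPlane.coe_im]

/-- Algebraic form of the focus/directrix parabola condition `dist z i = d(z, ℓ_r)`. -/
theorem stmt12 (r : ℝ) (hr : 0 < r) (z : ℍ) (x y : ℝ) (hx : x = z.re) (hy : y = z.im) :
    dist z UpperHalfPlane.I = Metric.infDist z (ell r) ↔
      1 - r ^ 2 + 4 * x ^ 2 + (1 - 1 / r ^ 2) * (x ^ 2 + y ^ 2) ^ 2 = 0 := by
  have hy0 : 0 < y := hy ▸ z.im_pos
  obtain ⟨S, hS⟩ : ∃ S : ℝ, S = x ^ 2 + y ^ 2 + r ^ 2 := ⟨_, rfl⟩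
  have hS0 : 0 < S := by rw [hS]; positivity
  obtain ⟨Q, hQ⟩ : ∃ Q : ℝ, Q = S ^ 2 - 4 * r ^ 2 * x ^ 2 := ⟨_, rfl⟩
  have hQ' : Q = (x ^ 2 + y ^ 2 - r ^ 2) ^ 2 + 4 * r ^ 2 * y ^ 2 := by rw [hQ, hS]; ring
  have hQ0 : 0 < Q := by rw [hQ']; positivity
  obtain ⟨p, hp⟩ : ∃ p : ℝ, p = Real.sqrt Q := ⟨_, rfl⟩
  have hp0 : 0 < p := hp ▸ Real.sqrt_pos.mpr hQ0
  have hp2 : p ^ 2 = Q := by rw [hp]; exact Real.sq_sqrt hQ0.le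
  obtain ⟨d₀, hd₀⟩ : ∃ d : ℝ, d = Real.arsinh (|x ^ 2 + y ^ 2 - r ^ 2| / (2 * r * y)) := ⟨_, rfl⟩
  have hd₀0 : 0 ≤ d₀ := by
    rw [hd₀]; exact Real.arsinh_nonneg_iff.mpr (by positivity)
  have hcoshd₀ : Real.cosh d₀ = p / (2 * r * y) := by
    rw [hd₀, Real.cosh_arsinh]
    have h1 : 1 + (|x ^ 2 + y ^ 2 - r ^ 2| / (2 * r * y)) ^ 2 = (p / (2 * r * y)) ^ 2 := by
      rw [div_pow, div_pow, sq_abs, hp2, hQ']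
      field_simp
      ring
    rw [h1, Real.sqrt_sq (by positivity)]
  -- cosh of distance to a point on the circle
  have hcosh_mem : ∀ u : ℍ, u ∈ ell r →
      Real.cosh (dist z u) = (S - 2 * u.re * x) / (2 * y * u.im) ∧
        u.re ^ 2 + u.im ^ 2 = r ^ 2 := by
    intro u hu
    have habs : ‖(u : ℂ)‖ = r := hu
    have hsq : u.re ^ 2 + u.im ^ 2 = r ^ 2 := by
      have hn : Complex.normSq (u : ℂ) = r ^ 2 := by
        rw [← Complex.sq_norm, habs]
      rw [Complex.normSq_apply, UpperHalfPlane.coe_re, UpperHalfPlane.coe_im] at hn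
      linear_combination hn
    refine ⟨?_, hsq⟩
    have hb : 0 < u.im := u.im_pos
    have hden : (2 * y * u.im : ℝ) ≠ 0 := by positivity
    rw [cosh_dist_formula, ← hx, ← hy, one_add_div hden, div_eq_div_iff hden hden]
    linear_combination (2 * y * u.im) * hsq - (2 * y * u.im) * hS
  -- lower bound for cosh of distance to points of the circle
  have hlower : ∀ u : ℍ, u ∈ ell r → d₀ ≤ dist z u := by
    intro u hu
    obtain ⟨hcosh, hsq⟩ := hcosh_mem u hu
    have hb : 0 < u.im := u.im_pos
    have hpos : 0 < S - 2 * u.re * x := by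
      rw [hS]; nlinarith [sq_nonneg (x - u.re)]
    have hkey : u.im * p ≤ r * (S - 2 * u.re * x) := by
      have hid : (r * (S - 2 * u.re * x)) ^ 2 - (u.im * p) ^ 2
          = (u.re * S - 2 * r ^ 2 * x) ^ 2 := by
        rw [mul_pow, mul_pow, hp2, hQ]
        linear_combination (4 * r ^ 2 * x ^ 2 - S ^ 2) * hsq
      nlinarith [sq_nonneg (u.re * S - 2 * r ^ 2 * x), mul_pos hb hp0, mul_pos hr hpos]
    have hcoshle : Real.cosh d₀ ≤ Real.cosh (dist z u) := by
      rw [hcosh, hcoshd₀, div_le_div_iff₀ (by positivity) (by positivity)]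
      nlinarith [hkey]
    have h := Real.cosh_le_cosh.mp hcoshle
    rwa [abs_of_nonneg hd₀0, abs_of_nonneg dist_nonneg] at h
  -- the minimizing point
  obtain ⟨a₀, ha₀⟩ : ∃ a : ℝ, a = 2 * r ^ 2 * x / S := ⟨_, rfl⟩
  obtain ⟨b₀, hb₀⟩ : ∃ b : ℝ, b = r * p / S := ⟨_, rfl⟩
  have hb₀0 : 0 < b₀ := by rw [hb₀]; positivity
  have hsum : a₀ ^ 2 + b₀ ^ 2 = r ^ 2 := by
    rw [ha₀, hb₀, div_pow, div_pow, ← add_div, div_eq_iff (by positivity)]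
    rw [mul_pow r p, hp2, hQ]
    ring
  set u₀ : ℍ := UpperHalfPlane.mk (Complex.mk a₀ b₀) (by simpa using hb₀0) with hu₀
  have hu₀re : u₀.re = a₀ := rfl
  have hu₀im : u₀.im = b₀ := rfl
  have hu₀mem : u₀ ∈ ell r := by
    show ‖(u₀ : ℂ)‖ = r
    rw [Complex.norm_def]
    have hn : Complex.normSq (u₀ : ℂ) = r ^ 2 := by
      rw [Complex.normSq_apply]
      show a₀ * a₀ + b₀ * b₀ = r ^ 2
      linear_combination hsum
    rw [hn, Real.sqrt_sq hr.le]
  have hdistu₀ : dist z u₀ = d₀ := by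
    obtain ⟨hcosh, _⟩ := hcosh_mem u₀ hu₀mem
    refine cosh_inj_nonneg dist_nonneg hd₀0 ?_
    rw [hcosh, hcoshd₀, hu₀re, hu₀im, ha₀, hb₀,
      div_eq_div_iff (by positivity) (by positivity)]
    field_simp
    linear_combination (-1) * hp2 + (-1) * hQ
  -- compute the infimum
  have hinf : Metric.infDist z (ell r) = d₀ := by
    refine le_antisymm (hdistu₀ ▸ Metric.infDist_le_dist_of_mem hu₀mem) ?_
    rw [Metric.infDist_eq_iInf]
    have hne : Nonempty (ell r) := ⟨u₀, hu₀mem⟩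
    exact le_ciInf fun u => hlower u u.2
  rw [hinf]
  -- the final equivalence
  have hcoshI : Real.cosh (dist z UpperHalfPlane.I) = (x ^ 2 + y ^ 2 + 1) / (2 * y) := by
    have h2y : (2 * y * (1:ℝ)) ≠ 0 := by positivity
    rw [cosh_dist_formula, UpperHalfPlane.I_re, UpperHalfPlane.I_im, ← hx, ← hy,
      one_add_div h2y]
    rw [div_eq_div_iff h2y (by positivity)]
    ring
  constructor
  · intro h
    have hc : (x ^ 2 + y ^ 2 + 1) / (2 * y) = p / (2 * r * y) := by
      rw [← hcoshI, ← hcoshd₀, h]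
    have hpe : r * (x ^ 2 + y ^ 2 + 1) = p := by
      rw [div_eq_div_iff (by positivity) (by positivity)] at hc
      have h2y : (2 * y : ℝ) ≠ 0 := by positivity
      refine mul_left_cancel₀ h2y ?_
      linear_combination hc
    have hsqe : r ^ 2 * (x ^ 2 + y ^ 2 + 1) ^ 2 = Q := by
      rw [← hp2, ← hpe]; ring
    rw [hQ, hS] at hsqe
    have hr2 : (r : ℝ) ^ 2 ≠ 0 := by positivity
    field_simp
    linear_combination hsqe
  · intro h
    have hr2 : (r : ℝ) ^ 2 ≠ 0 := by positivity
    have h' : r ^ 2 - r ^ 4 + 4 * r ^ 2 * x ^ 2 + (r ^ 2 - 1) * (x ^ 2 + y ^ 2) ^ 2 = 0 := by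
      have hr0 : (r : ℝ) ≠ 0 := hr.ne'
      field_simp at h
      linear_combination h
    have hsqe : Q = (r * (x ^ 2 + y ^ 2 + 1)) ^ 2 := by
      rw [hQ, hS]
      linear_combination -h'
    have hpe : p = r * (x ^ 2 + y ^ 2 + 1) := by
      rw [hp, hsqe, Real.sqrt_sq (by positivity)]
    refine cosh_inj_nonneg dist_nonneg hd₀0 ?_
    rw [hcoshI, hcoshd₀, hpe, div_eq_div_iff (by positivity) (by positivity)]
    ring
end

section
/- For every r > 0 with r ≠ 1, the focus/directrix parabola {z ∈ ℍ : dist z i = Metric.infDist z ℓ_r} with focus i and directrix ℓ_r is not a compact subset of ℍ. -/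
open UpperHalfPlane Real

lemma my_dist_formula (z w : ℍ) :
    dist z w = 2 * Real.arsinh
      (Real.sqrt ((((z:ℂ).re - (w:ℂ).re)^2 + (z.im - w.im)^2) / (4 * (z.im * w.im)))) := by
  rw [UpperHalfPlane.dist_eq, Complex.dist_eq_re_im]
  congr 2
  have h4 : Real.sqrt 4 = 2 := by
    rw [show (4:ℝ) = 2^2 by norm_num, Real.sqrt_sq (by norm_num : (0:ℝ) ≤ 2)]
  rw [Real.sqrt_div (by positivity), Real.sqrt_mul (by norm_num : (0:ℝ) ≤ 4), h4]
  simp [UpperHalfPlane.coe_im]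

lemma ell_nonempty (r : ℝ) (hr : 0 < r) : (ell r).Nonempty := by
  refine ⟨vpt r hr, ?_⟩
  simp [ell, vpt, map_mul, Complex.norm_I, Complex.norm_real, abs_of_pos hr]

lemma ell_closed (r : ℝ) : IsClosed (ell r) := by
  have : ell r = (fun u : ℍ => ‖(u : ℂ)‖) ⁻¹' {r} := rfl
  rw [this]
  exact IsClosed.preimage (continuous_norm.comp continuous_coe) isClosed_singleton

set_option maxHeartbeats 2000000 in
lemma far (r : ℝ) (hr : 0 < r) (hr1 : r ≠ 1) (n : ℝ) :
    ∃ z : ℍ, dist z UpperHalfPlane.I = Metric.infDist z (ell r) ∧ n ≤ dist z UpperHalfPlane.I := by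
  classical
  have habs : 0 < |r - 1| := abs_pos.mpr (sub_ne_zero.mpr hr1)
  obtain ⟨ε, hε0, hεhalf, hεr, hεr1, hεexp⟩ :
      ∃ ε : ℝ, 0 < ε ∧ ε ≤ 1/2 ∧ ε ≤ r/2 ∧ ε ≤ |r-1|/2 ∧ ε ≤ Real.exp (-n) := by
    refine ⟨min (min (1/2) (r/2)) (min (|r-1|/2) (Real.exp (-n))), ?_, ?_, ?_, ?_, ?_⟩
    · exact lt_min (lt_min (by norm_num) (by linarith)) (lt_min (by linarith) (Real.exp_pos _))
    · exact le_trans (min_le_left _ _) (min_le_left _ _)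
    · exact le_trans (min_le_left _ _) (min_le_right _ _)
    · exact le_trans (min_le_right _ _) (min_le_left _ _)
    · exact le_trans (min_le_right _ _) (min_le_right _ _)
  -- the horizontal path at height ε
  have hεim : ∀ x : ℝ, 0 < (Complex.mk x ε).im := fun _ => hε0
  set F : ℝ → ℍ := fun x => UpperHalfPlane.mk (Complex.mk x ε) (hεim x) with hFdef
  have hFim : ∀ x, (F x).im = ε := fun x => rfl
  have hFre : ∀ x, (F x : ℂ).re = x := fun x => rfl
  have hFcont : Continuous F := by
    rw [UpperHalfPlane.isEmbedding_coe.continuous_iff]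
    have : ((↑) : ℍ → ℂ) ∘ F = fun x : ℝ => (x:ℂ) + (ε:ℂ) * Complex.I := by
      funext x
      apply Complex.ext <;> simp [F]
    rw [this]
    exact Complex.continuous_ofReal.add continuous_const
  set g : ℝ → ℝ := fun x => dist (F x) UpperHalfPlane.I - Metric.infDist (F x) (ell r) with hgdef
  have hgcont : Continuous g :=
    (hFcont.dist continuous_const).sub ((Metric.continuous_infDist_pt (ell r)).comp hFcont)
  have hne := ell_nonempty r hr
  have hclosed := ell_closed r
  have hεltr : ε < r := lt_of_le_of_lt hεr (by linarith)
  obtain ⟨b, hb2, hb0⟩ : ∃ b : ℝ, b * b = r^2 - ε^2 ∧ 0 ≤ b :=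
    ⟨Real.sqrt (r^2 - ε^2), Real.mul_self_sqrt (by nlinarith), Real.sqrt_nonneg _⟩
  have hbmem : F b ∈ ell r := by
    show ‖(F b : ℂ)‖ = r
    have hcoe : (F b : ℂ) = Complex.mk b ε := rfl
    rw [hcoe, Complex.norm_def, Complex.normSq_mk, hb2,
      show r^2 - ε^2 + ε*ε = r^2 by ring, Real.sqrt_sq hr.le]
  have hFbI : F b ≠ UpperHalfPlane.I := by
    intro h
    have := congrArg UpperHalfPlane.im h
    rw [hFim, UpperHalfPlane.I_im] at this
    linarith
  have hgb : 0 < g b := by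
    have h0 : Metric.infDist (F b) (ell r) = 0 := Metric.infDist_zero_of_mem hbmem
    have : g b = dist (F b) UpperHalfPlane.I - Metric.infDist (F b) (ell r) := rfl
    rw [this, h0, sub_zero]
    exact dist_pos.mpr hFbI
  -- geometric data about points of ell r
  have hcoords : ∀ w : ℍ, w ∈ ell r →
      (w:ℂ).re ^ 2 + w.im ^ 2 = r ^ 2 ∧ 0 < w.im ∧ w.im ≤ r ∧ (w:ℂ).re ≤ r := by
    intro w hw
    have habs' : ‖(w:ℂ)‖ = r := hw
    have h1 : (w:ℂ).re ^ 2 + w.im ^ 2 = r ^ 2 := by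
      have h2 := Complex.sq_norm (w:ℂ)
      rw [habs'] at h2
      have h3 := Complex.normSq_apply (w:ℂ)
      rw [UpperHalfPlane.coe_im] at h3
      nlinarith [h2, h3]
    have h2 : 0 < w.im := w.im_pos
    have h3 : w.im ≤ r := by nlinarith [sq_nonneg ((w:ℂ).re)]
    have h4 : (w:ℂ).re ≤ r := by nlinarith [sq_nonneg (w.im)]
    exact ⟨h1, h2, h3, h4⟩
  have hIre : ((UpperHalfPlane.I : ℍ) : ℂ).re = 0 := by rw [UpperHalfPlane.coe_I]; simp
  have hIim : (UpperHalfPlane.I : ℍ).im = 1 := UpperHalfPlane.I_im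
  -- a point where g vanishes
  have key : ∃ x : ℝ, g x = 0 := by
    rcases lt_or_gt_of_ne hr1 with hlt | hgt
    · -- r < 1 : use a with a*(1-r) = 3, interval [b, a]
      have h1r : 0 < 1 - r := by linarith
      obtain ⟨a, ha', ha3⟩ : ∃ a : ℝ, a * (1 - r) = 3 ∧ 3 ≤ a := by
        refine ⟨3 / (1-r), by field_simp, ?_⟩
        rw [le_div_iff₀ h1r]; nlinarith
      have hb1 : b ≤ 1 := by nlinarith [hb2, hε0, hlt, hr]
      have hba : b ≤ a := by linarith
      have hga : g a < 0 := by
        obtain ⟨w, hwmem, hwdist⟩ := hclosed.exists_infDist_eq_dist hne (F a)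
        obtain ⟨huv, hv0, hvr, hur⟩ := hcoords w hwmem
        have hε1 : (ε - 1)^2 ≤ 1 := by nlinarith
        have hstep : (a^2 + (ε - 1)^2) * (4 * (ε * w.im))
            < ((a - (w:ℂ).re)^2 + (ε - w.im)^2) * (4 * (ε * 1)) := by
          have hkeyexpand : (a-r)^2 - r*a^2 - r*(ε-1)^2 = a*(3-2*r) + r^2 - r*(ε-1)^2 := by
            linear_combination a * ha'
          have h8 : (3:ℝ) ≤ a*(3-2*r) := by nlinarith [ha3, hr, hlt]
          have h9 : -(1:ℝ)/4 ≤ r^2 - r := by nlinarith [sq_nonneg (r-1/2)]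
          have h7 : r*(ε-1)^2 ≤ r := by nlinarith [hε1, hr]
          have hkey : r * (a^2 + (ε-1)^2) < (a - r)^2 := by linarith
          have h5 : (a^2 + (ε-1)^2) * w.im ≤ (a^2 + (ε-1)^2) * r :=
            mul_le_mul_of_nonneg_left hvr (by positivity)
          have h6 : (a - r)^2 ≤ (a - (w:ℂ).re)^2 := by
            nlinarith [mul_nonneg (sub_nonneg.mpr hur) (show (0:ℝ) ≤ 2*a - (w:ℂ).re - r by linarith)]
          have hchain : (a^2 + (ε-1)^2) * w.im < (a - (w:ℂ).re)^2 + (ε - w.im)^2 := by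
            nlinarith [h5, hkey, h6, sq_nonneg (ε - w.im), hr]
          nlinarith [mul_lt_mul_of_pos_left hchain (show (0:ℝ) < 4*ε by positivity)]
        have hgaeq : g a = dist (F a) UpperHalfPlane.I - Metric.infDist (F a) (ell r) := rfl
        rw [hgaeq, sub_neg, hwdist,
          my_dist_formula (F a) UpperHalfPlane.I, my_dist_formula (F a) w,
          hFre, hFim, hIre, hIim]
        apply mul_lt_mul_of_pos_left _ (by norm_num : (0:ℝ) < 2)
        rw [Real.arsinh_lt_arsinh]
        apply Real.sqrt_lt_sqrt (by positivity)
        rw [div_lt_div_iff₀ (by positivity) (by positivity)]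
        refine lt_of_eq_of_lt ?_ (lt_of_lt_of_eq hstep ?_) <;> ring
      obtain ⟨x, -, hx⟩ := intermediate_value_Icc' hba hgcont.continuousOn ⟨hga.le, hgb.le⟩
      exact ⟨x, hx⟩
    · -- 1 < r : use a = 0, interval [0, b]
      have hga : g 0 < 0 := by
        obtain ⟨w, hwmem, hwdist⟩ := hclosed.exists_infDist_eq_dist hne (F 0)
        obtain ⟨huv, hv0, hvr, hur⟩ := hcoords w hwmem
        have hεr1' : ε ≤ (r - 1)/2 := by rwa [abs_of_pos (by linarith)] at hεr1
        have hkey : ε^2 < r - 1 := by nlinarith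
        have hstep : (((0:ℝ) - 0)^2 + (ε - 1)^2) * (4 * (ε * w.im))
            < ((0 - (w:ℂ).re)^2 + (ε - w.im)^2) * (4 * (ε * 1)) := by
          have h5 : (1+ε^2) * w.im ≤ (1+ε^2) * r := mul_le_mul_of_nonneg_left hvr (by positivity)
          have h6 : 0 < r*(r-1-ε^2) := mul_pos hr (by linarith)
          have hchain : (ε-1)^2 * w.im < (0 - (w:ℂ).re)^2 + (ε - w.im)^2 := by
            nlinarith [huv, h5, h6]
          nlinarith [mul_lt_mul_of_pos_left hchain (show (0:ℝ) < 4*ε by positivity)]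
        have hgaeq : g 0 = dist (F 0) UpperHalfPlane.I - Metric.infDist (F 0) (ell r) := rfl
        rw [hgaeq, sub_neg, hwdist,
          my_dist_formula (F 0) UpperHalfPlane.I, my_dist_formula (F 0) w,
          hFre, hFim, hIre, hIim]
        apply mul_lt_mul_of_pos_left _ (by norm_num : (0:ℝ) < 2)
        rw [Real.arsinh_lt_arsinh]
        apply Real.sqrt_lt_sqrt (by positivity)
        rw [div_lt_div_iff₀ (by positivity) (by positivity)]
        refine lt_of_eq_of_lt ?_ (lt_of_lt_of_eq hstep ?_) <;> ring
      obtain ⟨x, -, hx⟩ := intermediate_value_Icc hb0 hgcont.continuousOn ⟨hga.le, hgb.le⟩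
      exact ⟨x, hx⟩
  obtain ⟨x, hx⟩ := key
  have hx' : dist (F x) UpperHalfPlane.I - Metric.infDist (F x) (ell r) = 0 := hx
  refine ⟨F x, sub_eq_zero.mp hx', ?_⟩
  have h1 := UpperHalfPlane.dist_log_im_le (F x) UpperHalfPlane.I
  rw [hFim, UpperHalfPlane.I_im, Real.log_one, Real.dist_eq, sub_zero] at h1
  have hlog : Real.log ε ≤ -n := by
    have := Real.log_le_log hε0 hεexp
    rwa [Real.log_exp] at this
  calc n ≤ -Real.log ε := by linarith
  _ ≤ |Real.log ε| := neg_le_abs _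
  _ ≤ dist (F x) UpperHalfPlane.I := h1

/-- For `r ≠ 1`, the focus/directrix parabola is not compact. -/
theorem stmt13 (r : ℝ) (hr : 0 < r) (hr1 : r ≠ 1) :
    ¬ IsCompact {z : ℍ | dist z UpperHalfPlane.I = Metric.infDist z (ell r)} := by
  intro hK
  obtain ⟨C, hC⟩ := hK.isBounded.subset_closedBall UpperHalfPlane.I
  obtain ⟨z, hz1, hz2⟩ := far r hr hr1 (C + 1)
  have hzmem : z ∈ Metric.closedBall UpperHalfPlane.I C := hC hz1
  rw [Metric.mem_closedBall] at hzmem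
  linarith
end

section
/- Fix a point z = x + iy in the hyperbolic upper half-plane ℍ. Then, as b → 0 from the right, dist z i + dist z (bi) + log b tends to log((x² + y² + 1 + √((x² − y² + 1)² + 4x²y²))·(x² + y²) / (2y²)). (Consequently, the two-focus parabola with fixed focus i, obtained as the limit of two-focus ellipses with foci i and bi keeping b·e^c = C/2 constant as b → 0⁺, is the curve (x² + y² + 1 + √((x² − y² + 1)² + 4x²y²))·(x² + y²) = C·y².) -/
open UpperHalfPlane

/-- The point `t·i` of `ℍ` for `t > 0`, extended by a junk value elsewhere. -/
noncomputable def vpt' (t : ℝ) : ℍ :=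
  if ht : 0 < t then vpt t ht else UpperHalfPlane.I

lemma aux_dist_vpt (z : ℍ) (t : ℝ) (ht : 0 < t) :
    dist z (vpt' t) + Real.log t =
      Real.log ((Norm.norm ((z : ℂ) - t * Complex.I) +
        Norm.norm ((z : ℂ) + t * Complex.I)) ^ 2 / (4 * z.im)) := by
  have hy : 0 < z.im := z.im_pos
  rw [vpt', dif_pos ht]
  have hE := UpperHalfPlane.exp_half_dist z (vpt t ht)
  have hcoe : ((vpt t ht : ℍ) : ℂ) = (t : ℂ) * Complex.I := rfl
  have him : (vpt t ht).im = t := by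
    simp [vpt, UpperHalfPlane.mk_im]
  have hconj : (starRingEnd ℂ) ((t : ℂ) * Complex.I) = -((t : ℂ) * Complex.I) := by
    simp
  rw [hcoe, him, hconj] at hE
  set a : ℝ := Norm.norm ((z : ℂ) - t * Complex.I)
  set b : ℝ := Norm.norm ((z : ℂ) + t * Complex.I)
  have hE' : Real.exp (dist z (vpt t ht) / 2) = (a + b) / (2 * Real.sqrt (z.im * t)) := by
    rw [hE]
    congr 1
    simp [a, b, Complex.dist_eq, sub_neg_eq_add]
  have hb : 0 < b := by
    have : ((z : ℂ) + t * Complex.I) ≠ 0 := by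
      intro h
      have := congrArg Complex.im h
      simp [UpperHalfPlane.coe_im] at this
      nlinarith [z.im_pos]
    simpa [b] using (norm_pos_iff.mpr this)
  have ha : 0 ≤ a := norm_nonneg _
  have hab : 0 < a + b := by linarith
  have hd : dist z (vpt t ht) / 2 = Real.log ((a + b) / (2 * Real.sqrt (z.im * t))) := by
    rw [← hE', Real.log_exp]
  have hsq : ((a + b) / (2 * Real.sqrt (z.im * t))) ^ 2 * t = (a + b) ^ 2 / (4 * z.im) := by
    have hst : Real.sqrt (z.im * t) ^ 2 = z.im * t := Real.sq_sqrt (by positivity)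
    rw [div_pow, mul_pow, hst]
    field_simp
    ring
  have hEpos : 0 < (a + b) / (2 * Real.sqrt (z.im * t)) := by positivity
  calc dist z (vpt t ht) + Real.log t
      = 2 * (dist z (vpt t ht) / 2) + Real.log t := by ring
    _ = 2 * Real.log ((a + b) / (2 * Real.sqrt (z.im * t))) + Real.log t := by rw [hd]
    _ = Real.log (((a + b) / (2 * Real.sqrt (z.im * t))) ^ 2 * t) := by
        rw [Real.log_mul (by positivity) (ne_of_gt ht), Real.log_pow]
        push_cast
        ring
    _ = _ := by rw [hsq]

lemma aux_dist_I (z : ℍ) :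
    dist z UpperHalfPlane.I =
      Real.log ((Norm.norm ((z : ℂ) - Complex.I) +
        Norm.norm ((z : ℂ) + Complex.I)) ^ 2 / (4 * z.im)) := by
  have hy : 0 < z.im := z.im_pos
  have hE := UpperHalfPlane.exp_half_dist z UpperHalfPlane.I
  rw [UpperHalfPlane.coe_I, UpperHalfPlane.I_im] at hE
  have hconj : (starRingEnd ℂ) Complex.I = -Complex.I := Complex.conj_I
  rw [hconj] at hE
  set a : ℝ := Norm.norm ((z : ℂ) - Complex.I)
  set b : ℝ := Norm.norm ((z : ℂ) + Complex.I)
  have hE' : Real.exp (dist z UpperHalfPlane.I / 2) = (a + b) / (2 * Real.sqrt z.im) := by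
    rw [hE]
    congr 1
    · simp [a, b, Complex.dist_eq, sub_neg_eq_add]
    · rw [mul_one]
  have hb : 0 < b := by
    have : ((z : ℂ) + Complex.I) ≠ 0 := by
      intro h
      have := congrArg Complex.im h
      simp [UpperHalfPlane.coe_im] at this
      nlinarith [z.im_pos]
    simpa [b] using (norm_pos_iff.mpr this)
  have ha : 0 ≤ a := norm_nonneg _
  have hd : dist z UpperHalfPlane.I / 2 = Real.log ((a + b) / (2 * Real.sqrt z.im)) := by
    rw [← hE', Real.log_exp]
  have hst : Real.sqrt z.im ^ 2 = z.im := Real.sq_sqrt hy.le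
  have hsq : ((a + b) / (2 * Real.sqrt z.im)) ^ 2 = (a + b) ^ 2 / (4 * z.im) := by
    field_simp
    nlinarith [hst]
  calc dist z UpperHalfPlane.I = 2 * (dist z UpperHalfPlane.I / 2) := by ring
    _ = 2 * Real.log ((a + b) / (2 * Real.sqrt z.im)) := by rw [hd]
    _ = Real.log (((a + b) / (2 * Real.sqrt z.im)) ^ 2) := by
        rw [Real.log_pow]; push_cast; ring
    _ = _ := by rw [hsq]

/-- As `b → 0⁺`, `dist z i + dist z (bi) + log b` tends to
`log((x² + y² + 1 + √((x² − y² + 1)² + 4x²y²))·(x² + y²) / (2y²))`. -/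
theorem stmt14 (z : ℍ) (x y : ℝ) (hx : x = z.re) (hy : y = z.im) :
    Filter.Tendsto
      (fun b : ℝ => dist z UpperHalfPlane.I + dist z (vpt' b) + Real.log b)
      (nhdsWithin 0 (Set.Ioi 0))
      (nhds (Real.log
        ((x ^ 2 + y ^ 2 + 1 + Real.sqrt ((x ^ 2 - y ^ 2 + 1) ^ 2 + 4 * x ^ 2 * y ^ 2)) *
          (x ^ 2 + y ^ 2) / (2 * y ^ 2)))) := by
  subst hx hy
  have hy0 : 0 < z.im := z.im_pos
  have hz0 : (z : ℂ) ≠ 0 := by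
    intro h
    have := congrArg Complex.im h
    simp [UpperHalfPlane.coe_im] at this
    exact hy0.ne' this
  have hzabs : 0 < Norm.norm (z : ℂ) := norm_pos_iff.mpr hz0
  -- the continuous inner function
  set F : ℝ → ℝ := fun b =>
    (Norm.norm ((z : ℂ) - b * Complex.I) + Norm.norm ((z : ℂ) + b * Complex.I)) ^ 2 /
      (4 * z.im) with hF
  have hFcont : Continuous F := by
    apply Continuous.div_const
    apply Continuous.pow
    apply Continuous.add
    · exact (continuous_norm.comp (by continuity))
    · exact (continuous_norm.comp (by continuity))
  have hF0 : F 0 = Norm.norm (z : ℂ) ^ 2 / z.im := by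
    simp only [hF, Complex.ofReal_zero, zero_mul, sub_zero, add_zero]
    field_simp
    ring
  have hF0pos : F 0 ≠ 0 := by
    rw [hF0]; positivity
  have h1 : Filter.Tendsto (fun b : ℝ => Real.log (F b)) (nhdsWithin 0 (Set.Ioi 0))
      (nhds (Real.log (Norm.norm (z : ℂ) ^ 2 / z.im))) := by
    rw [← hF0]
    exact ((Real.continuousAt_log hF0pos).comp (hFcont.continuousAt)).tendsto.mono_left
      nhdsWithin_le_nhds
  have h2 : Filter.Tendsto
      (fun b : ℝ => dist z UpperHalfPlane.I + dist z (vpt' b) + Real.log b)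
      (nhdsWithin 0 (Set.Ioi 0))
      (nhds (dist z UpperHalfPlane.I + Real.log (Norm.norm (z : ℂ) ^ 2 / z.im))) := by
    refine Filter.Tendsto.congr' ?_ (h1.const_add (dist z UpperHalfPlane.I))
    filter_upwards [self_mem_nhdsWithin] with b (hb : 0 < b)
    rw [hF, add_assoc, aux_dist_vpt z b hb]
  convert h2 using 2
  -- now the algebraic identity
  set a1 : ℝ := Norm.norm ((z : ℂ) - Complex.I) with ha1d
  set a2 : ℝ := Norm.norm ((z : ℂ) + Complex.I) with ha2d
  have e1 : a1 ^ 2 = z.re ^ 2 + (z.im - 1) ^ 2 := by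
    rw [← Complex.normSq_eq_norm_sq]
    simp [Complex.normSq_apply, UpperHalfPlane.coe_re, UpperHalfPlane.coe_im]
    ring
  have e2 : a2 ^ 2 = z.re ^ 2 + (z.im + 1) ^ 2 := by
    rw [← Complex.normSq_eq_norm_sq]
    simp [Complex.normSq_apply, UpperHalfPlane.coe_re, UpperHalfPlane.coe_im]
    ring
  have e3 : a1 * a2 = Real.sqrt ((z.re ^ 2 - z.im ^ 2 + 1) ^ 2 + 4 * z.re ^ 2 * z.im ^ 2) := by
    have hmul : ((z : ℂ) - Complex.I) * ((z : ℂ) + Complex.I) = (z : ℂ) * (z : ℂ) + 1 := by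
      ring_nf
      simp [Complex.I_sq]
      ring
    have : a1 * a2 = Norm.norm ((z : ℂ) * (z : ℂ) + 1) := by
      rw [ha1d, ha2d, ← norm_mul, hmul]
    rw [this, Complex.norm_def]
    congr 1
    simp [Complex.normSq_apply, Complex.mul_re, Complex.mul_im]
    ring
  have e4 : Norm.norm (z : ℂ) ^ 2 = z.re ^ 2 + z.im ^ 2 := by
    rw [← Complex.normSq_eq_norm_sq]
    simp [Complex.normSq_apply]
    ring
  have hb2 : 0 < a2 := by
    have : ((z : ℂ) + Complex.I) ≠ 0 := by
      intro h
      have := congrArg Complex.im h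
      simp [UpperHalfPlane.coe_im] at this
      nlinarith
    simpa [a2] using (norm_pos_iff.mpr this)
  have ha1 : 0 ≤ a1 := norm_nonneg _
  have hS : (a1 + a2) ^ 2 = 2 * (z.re ^ 2 + z.im ^ 2 + 1) +
      2 * Real.sqrt ((z.re ^ 2 - z.im ^ 2 + 1) ^ 2 + 4 * z.re ^ 2 * z.im ^ 2) := by
    have : (a1 + a2) ^ 2 = a1 ^ 2 + a2 ^ 2 + 2 * (a1 * a2) := by ring
    rw [this, e1, e2, e3]; ring
  rw [aux_dist_I z]
  rw [← Real.log_mul (by positivity) (by rw [e4]; positivity)]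
  congr 1
  rw [hS, e4]
  field_simp
  ring
end

section
/- For every r > 0 with r ≠ 1 and every C > 0, the focus/directrix parabola never agrees with a two-focus parabola: {z ∈ ℍ : dist z i = Metric.infDist z ℓ_r} ≠ {z = x + iy ∈ ℍ : (x² + y² + 1 + √((x² − y² + 1)² + 4x²y²))·(x² + y²) = C·y²}, where the right-hand set is the two-focus parabola with focus i and parameter C. -/
set_option maxHeartbeats 1000000

open UpperHalfPlane

noncomputable def footRe (r : ℝ) (z : ℍ) : ℝ := 2 * z.re * r^2 / (z.re^2 + z.im^2 + r^2)
noncomputable def footIm (r : ℝ) (z : ℍ) : ℝ :=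
  r * Real.sqrt (4*r^2*z.im^2 + (z.re^2+z.im^2-r^2)^2) / (z.re^2 + z.im^2 + r^2)

lemma footIm_pos (r : ℝ) (hr : 0 < r) (z : ℍ) : 0 < footIm r z := by
  have hy := z.im_pos
  have h1 : 0 < 4*r^2*z.im^2 + (z.re^2+z.im^2-r^2)^2 := by positivity
  have h2 : 0 < Real.sqrt (4*r^2*z.im^2 + (z.re^2+z.im^2-r^2)^2) := Real.sqrt_pos.2 h1
  unfold footIm; positivity

noncomputable def foot (r : ℝ) (hr : 0 < r) (z : ℍ) : ℍ :=
  UpperHalfPlane.mk (Complex.mk (footRe r z) (footIm r z)) (footIm_pos r hr z)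

lemma foot_re (r : ℝ) (hr : 0 < r) (z : ℍ) : (foot r hr z).re = footRe r z := rfl
lemma foot_im (r : ℝ) (hr : 0 < r) (z : ℍ) : (foot r hr z).im = footIm r z := rfl

lemma foot_sq (r : ℝ) (hr : 0 < r) (z : ℍ) :
    (foot r hr z).re^2 + (foot r hr z).im^2 = r^2 := by
  have hy := z.im_pos
  set x := z.re; set y := z.im
  have hK : (0:ℝ) < x^2 + y^2 + r^2 := by positivity
  have hM : (0:ℝ) < 4*r^2*y^2 + (x^2+y^2-r^2)^2 := by positivity
  have hm2 : (Real.sqrt (4*r^2*y^2 + (x^2+y^2-r^2)^2))^2 = 4*r^2*y^2 + (x^2+y^2-r^2)^2 :=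
    Real.sq_sqrt hM.le
  rw [foot_re, foot_im]; unfold footRe footIm
  field_simp
  rw [Real.sq_sqrt (by positivity)]; ring

lemma foot_mem (r : ℝ) (hr : 0 < r) (z : ℍ) : foot r hr z ∈ ell r := by
  show ‖(foot r hr z : ℂ)‖ = r
  rw [Complex.norm_def, Complex.normSq_apply]
  have h : (foot r hr z : ℂ).re * (foot r hr z : ℂ).re + (foot r hr z : ℂ).im * (foot r hr z : ℂ).im = r^2 := by
    rw [UpperHalfPlane.coe_re, UpperHalfPlane.coe_im]; nlinarith [foot_sq r hr z]
  rw [h, Real.sqrt_sq hr.le]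

lemma mem_ell_sq {r : ℝ} (hr : 0 < r) {u : ℍ} (hu : u ∈ ell r) : u.re^2 + u.im^2 = r^2 := by
  have : ‖(u : ℂ)‖ = r := hu
  have h2 : (‖(u : ℂ)‖)^2 = r^2 := by rw [this]
  rw [Complex.sq_norm, Complex.normSq_apply, UpperHalfPlane.coe_re, UpperHalfPlane.coe_im] at h2
  nlinarith [h2]

lemma foot_min (r : ℝ) (hr : 0 < r) (z : ℍ) (u : ℍ) (hu : u ∈ ell r) :
    dist z (foot r hr z) ≤ dist z u := by
  have hy : (0:ℝ) < z.im := z.im_pos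
  have hb0 : (0:ℝ) < u.im := u.im_pos
  have hab : u.re^2 + u.im^2 = r^2 := mem_ell_sq hr hu
  have hK : (0:ℝ) < (z.re^2+z.im^2+r^2) := by positivity
  have hM : (0:ℝ) < (4*r^2*z.im^2 + (z.re^2+z.im^2-r^2)^2) := by positivity
  set m : ℝ := Real.sqrt (4*r^2*z.im^2 + (z.re^2+z.im^2-r^2)^2) with hmdef
  have hm0 : 0 < m := Real.sqrt_pos.2 hM
  have hm2 : m^2 = (4*r^2*z.im^2 + (z.re^2+z.im^2-r^2)^2) := Real.sq_sqrt hM.le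
  have hwre : (foot r hr z).re = 2*z.re*r^2/(z.re^2+z.im^2+r^2) := by
    rw [foot_re]; rfl
  have hwim : (foot r hr z).im = r*m/(z.re^2+z.im^2+r^2) := by
    rw [foot_im, hmdef]; rfl
  have hwim0 : 0 < (foot r hr z).im := (foot r hr z).im_pos
  rw [UpperHalfPlane.dist_le_iff_le_sinh, UpperHalfPlane.sinh_half_dist]
  rw [div_le_div_iff₀ (by positivity) (by positivity)]
  have h1 : (0:ℝ) ≤ dist (z:ℂ) (foot r hr z : ℂ) * (2 * Real.sqrt (z.im * u.im)) := by positivity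
  have h2 : (0:ℝ) ≤ dist (z:ℂ) (u : ℂ) * (2 * Real.sqrt (z.im * (foot r hr z).im)) := by positivity
  have hqu : (0:ℝ) ≤ z.im * u.im := by positivity
  have hqw : (0:ℝ) ≤ z.im * (foot r hr z).im := by positivity
  have key : (dist (z:ℂ) (foot r hr z : ℂ) * (2 * Real.sqrt (z.im * u.im)))^2
      ≤ (dist (z:ℂ) (u : ℂ) * (2 * Real.sqrt (z.im * (foot r hr z).im)))^2 := by
    rw [mul_pow, mul_pow, mul_pow, mul_pow, Real.sq_sqrt hqu, Real.sq_sqrt hqw,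
      Complex.dist_eq, Complex.dist_eq, Complex.sq_norm, Complex.sq_norm,
      Complex.normSq_apply, Complex.normSq_apply]
    simp only [Complex.sub_re, Complex.sub_im, UpperHalfPlane.coe_re, UpperHalfPlane.coe_im]
    rw [hwre, hwim]
    have hKwa : (2*z.re*r^2/(z.re^2+z.im^2+r^2))*(z.re^2+z.im^2+r^2) = 2*z.re*r^2 := by field_simp
    have hKwb : (r*m/(z.re^2+z.im^2+r^2))*(z.re^2+z.im^2+r^2) = r*m := by field_simp
    have hKM : (z.re^2+z.im^2+r^2)^2 = (4*r^2*z.im^2 + (z.re^2+z.im^2-r^2)^2) + 4*z.re^2*r^2 := by ring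
    have hr2' : (2*z.re*r^2/(z.re^2+z.im^2+r^2))^2 + (r*m/(z.re^2+z.im^2+r^2))^2 = r^2 := by
      have h9 : ((2*z.re*r^2/(z.re^2+z.im^2+r^2))^2 + (r*m/(z.re^2+z.im^2+r^2))^2)*(z.re^2+z.im^2+r^2)^2 = r^2*(z.re^2+z.im^2+r^2)^2 := by
        linear_combination ((2*z.re*r^2/(z.re^2+z.im^2+r^2))*(z.re^2+z.im^2+r^2)+2*z.re*r^2)*hKwa + ((r*m/(z.re^2+z.im^2+r^2))*(z.re^2+z.im^2+r^2)+r*m)*hKwb + r^2*hm2 - r^2*hKM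
      have h10 : ((z.re^2+z.im^2+r^2):ℝ)^2 ≠ 0 := by positivity
      field_simp at h9 ⊢
      nlinarith [h9]
    have hR : (0:ℝ) ≤ (z.re^2+z.im^2+r^2) - 2*z.re*u.re := by nlinarith [sq_nonneg (z.re - u.re), sq_nonneg u.im, hab]
    have hsq : (r*((z.re^2+z.im^2+r^2) - 2*z.re*u.re))^2 - (m*u.im)^2 = ((z.re^2+z.im^2+r^2)*u.re - 2*z.re*r^2)^2 := by
      linear_combination (u.im^2)*hKM - (u.im^2)*hm2 - ((z.re^2+z.im^2+r^2)^2 - 4*z.re^2*r^2)*hab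
    have hmb0 : (0:ℝ) ≤ m*u.im := by positivity
    have hstep : m*u.im ≤ r*((z.re^2+z.im^2+r^2) - 2*z.re*u.re) := by nlinarith [hsq, sq_nonneg ((z.re^2+z.im^2+r^2)*u.re - 2*z.re*r^2), hmb0, mul_nonneg hr.le hR]
    have e1 : ((z.re - 2*z.re*r^2/(z.re^2+z.im^2+r^2))*(z.re - 2*z.re*r^2/(z.re^2+z.im^2+r^2)) + (z.im - r*m/(z.re^2+z.im^2+r^2))*(z.im - r*m/(z.re^2+z.im^2+r^2))) * (2^2*(z.im*u.im)) * (z.re^2+z.im^2+r^2)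
        = 4*z.im*u.im*(m^2 - 2*z.im*(r*m)) := by
      linear_combination (4*z.im*u.im)*hKM - (4*z.im*u.im)*hm2 - (8*z.re*z.im*u.im)*hKwa - (8*z.im^2*u.im)*hKwb + (4*z.im*u.im*(z.re^2+z.im^2+r^2))*hr2'
    have e2 : ((z.re - u.re)*(z.re - u.re) + (z.im - u.im)*(z.im - u.im)) * (2^2*(z.im*(r*m/(z.re^2+z.im^2+r^2)))) * (z.re^2+z.im^2+r^2)
        = 4*z.im*(r*m)*((z.re^2+z.im^2+r^2) - 2*z.re*u.re - 2*z.im*u.im) := by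
      linear_combination (4*z.im*((z.re^2+z.im^2+r^2) - 2*z.re*u.re - 2*z.im*u.im))*hKwb + (4*z.im*(r*m/(z.re^2+z.im^2+r^2))*(z.re^2+z.im^2+r^2))*hab
    have hProd : 4*z.im*u.im*(m^2 - 2*z.im*(r*m)) ≤ 4*z.im*(r*m)*((z.re^2+z.im^2+r^2) - 2*z.re*u.re - 2*z.im*u.im) := by
      nlinarith [mul_nonneg (mul_nonneg hy.le hm0.le) (sub_nonneg.2 hstep)]
    refine le_of_mul_le_mul_right ?_ hK
    rw [e1, e2]
    exact hProd
  have h3 := Real.sqrt_le_sqrt key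
  rwa [Real.sqrt_sq h1, Real.sqrt_sq h2] at h3

lemma infDist_eq_foot (r : ℝ) (hr : 0 < r) (z : ℍ) :
    Metric.infDist z (ell r) = dist z (foot r hr z) := by
  refine le_antisymm (Metric.infDist_le_dist_of_mem (foot_mem r hr z)) ?_
  by_contra hcon
  push_neg at hcon
  obtain ⟨u, hu, hlt⟩ := (Metric.infDist_lt_iff ⟨_, foot_mem r hr z⟩).1 hcon
  exact absurd hlt (not_lt.2 (foot_min r hr z u hu))

lemma mem_parabola (r : ℝ) (hr : 0 < r) (z : ℍ)
    (h : r^2*(z.re^2+z.im^2+1)^2 = 4*r^2*z.im^2 + (z.re^2+z.im^2-r^2)^2) :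
    dist z UpperHalfPlane.I = Metric.infDist z (ell r) := by
  have hy : (0:ℝ) < z.im := z.im_pos
  have hK : (0:ℝ) < (z.re^2+z.im^2+r^2) := by positivity
  have hM : (0:ℝ) < (4*r^2*z.im^2 + (z.re^2+z.im^2-r^2)^2) := by positivity
  have hm : Real.sqrt (4*r^2*z.im^2 + (z.re^2+z.im^2-r^2)^2) = r*(z.re^2+z.im^2+1) := by
    have h2 : (4*r^2*z.im^2 + (z.re^2+z.im^2-r^2)^2) = (r*(z.re^2+z.im^2+1))^2 := by linear_combination -h
    rw [h2, Real.sqrt_sq (by positivity)]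
  rw [infDist_eq_foot r hr z]
  have hwre : (foot r hr z).re = 2*z.re*r^2/(z.re^2+z.im^2+r^2) := by
    rw [foot_re]; rfl
  have hwim : (foot r hr z).im = r^2*(z.re^2+z.im^2+1)/(z.re^2+z.im^2+r^2) := by
    rw [foot_im]; unfold footIm; rw [hm]; ring
  have hwim0 : 0 < (foot r hr z).im := (foot r hr z).im_pos
  rw [UpperHalfPlane.dist_eq_iff_eq_sinh, UpperHalfPlane.sinh_half_dist]
  have pos1 : (0:ℝ) < 2 * Real.sqrt (z.im * UpperHalfPlane.I.im) := by
    simp only [UpperHalfPlane.I_im, mul_one]; positivity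
  have pos2 : (0:ℝ) < 2 * Real.sqrt (z.im * (foot r hr z).im) := by positivity
  rw [div_eq_div_iff pos1.ne' pos2.ne']
  have h1 : (0:ℝ) ≤ dist (z:ℂ) (UpperHalfPlane.I : ℂ) * (2 * Real.sqrt (z.im * (foot r hr z).im)) := by positivity
  have h2 : (0:ℝ) ≤ dist (z:ℂ) (foot r hr z : ℂ) * (2 * Real.sqrt (z.im * UpperHalfPlane.I.im)) := by positivity
  rw [← sq_eq_sq₀ h1 h2, mul_pow, mul_pow, mul_pow, mul_pow,
    Real.sq_sqrt (by positivity : (0:ℝ) ≤ z.im * (foot r hr z).im),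
    Real.sq_sqrt (by simp only [UpperHalfPlane.I_im, mul_one]; positivity : (0:ℝ) ≤ z.im * UpperHalfPlane.I.im),
    Complex.dist_eq, Complex.dist_eq, Complex.sq_norm, Complex.sq_norm,
    Complex.normSq_apply, Complex.normSq_apply]
  simp only [Complex.sub_re, Complex.sub_im, UpperHalfPlane.coe_re, UpperHalfPlane.coe_im,
    UpperHalfPlane.coe_I, Complex.I_re, Complex.I_im, UpperHalfPlane.I_im]
  rw [hwre, hwim]
  have hKwa : (2*z.re*r^2/(z.re^2+z.im^2+r^2))*(z.re^2+z.im^2+r^2) = 2*z.re*r^2 := by field_simp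
  have hKwb : (r^2*(z.re^2+z.im^2+1)/(z.re^2+z.im^2+r^2))*(z.re^2+z.im^2+r^2) = r^2*(z.re^2+z.im^2+1) := by field_simp
  have hr2' : (2*z.re*r^2/(z.re^2+z.im^2+r^2))^2 + (r^2*(z.re^2+z.im^2+1)/(z.re^2+z.im^2+r^2))^2 = r^2 := by
    have h9 : ((2*z.re*r^2/(z.re^2+z.im^2+r^2))^2 + (r^2*(z.re^2+z.im^2+1)/(z.re^2+z.im^2+r^2))^2)*(z.re^2+z.im^2+r^2)^2 = r^2*(z.re^2+z.im^2+r^2)^2 := by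
      linear_combination ((2*z.re*r^2/(z.re^2+z.im^2+r^2))*(z.re^2+z.im^2+r^2)+2*z.re*r^2)*hKwa + ((r^2*(z.re^2+z.im^2+1)/(z.re^2+z.im^2+r^2))*(z.re^2+z.im^2+r^2)+r^2*(z.re^2+z.im^2+1))*hKwb + r^2*h
    have h10 : ((z.re^2+z.im^2+r^2):ℝ)^2 ≠ 0 := by positivity
    field_simp at h9 ⊢
    nlinarith [h9]
  refine mul_right_cancel₀ (b := (z.re^2+z.im^2+r^2)^2) (by positivity) ?_
  linear_combination (4*z.im*(z.re^2+z.im^2+r^2))*h + (8*z.re*z.im*(z.re^2+z.im^2+r^2))*hKwa + (4*z.im*(z.re^2+z.im^2+1)*(z.re^2+z.im^2+r^2))*hKwb - (4*z.im*(z.re^2+z.im^2+r^2)^2)*hr2'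


/-- A focus/directrix parabola never coincides with a two-focus parabola. -/
theorem stmt15 (r C : ℝ) (hr : 0 < r) (hr1 : r ≠ 1) (hC : 0 < C) :
    {z : ℍ | dist z UpperHalfPlane.I = Metric.infDist z (ell r)} ≠
      {z : ℍ | (z.re ^ 2 + z.im ^ 2 + 1 +
          Real.sqrt ((z.re ^ 2 - z.im ^ 2 + 1) ^ 2 + 4 * z.re ^ 2 * z.im ^ 2)) *
          (z.re ^ 2 + z.im ^ 2) = C * z.im ^ 2} := by
  intro hset
  have hsr : 0 < Real.sqrt r := Real.sqrt_pos.2 hr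
  set z1 : ℍ := vpt (Real.sqrt r) hsr with hz1
  have hz1re : z1.re = 0 := vpt_re _ _
  have hz1im : z1.im = Real.sqrt r := vpt_im _ _
  have hy2 : z1.im ^ 2 = r := by rw [hz1im]; exact Real.sq_sqrt hr.le
  have h1 : z1 ∈ {z : ℍ | dist z UpperHalfPlane.I = Metric.infDist z (ell r)} := by
    refine mem_parabola r hr z1 ?_
    rw [hz1re]
    linear_combination ((r^2-1)*(z1.im^2 + r))*hy2
  rw [hset] at h1
  simp only [Set.mem_setOf_eq] at h1
  rw [hz1re, hy2] at h1
  have h1' : (r + 1 + |1 - r|) * r = C * r := by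
    have : Real.sqrt ((0 ^ 2 - r + 1) ^ 2 + 4 * 0 ^ 2 * r) = |1 - r| := by
      rw [show (0 ^ 2 - r + 1) ^ 2 + 4 * 0 ^ 2 * r = (1-r)^2 by ring, Real.sqrt_sq_eq_abs]
    rw [this] at h1
    linarith [h1]
  have hC0 : C = r + 1 + |1 - r| := (mul_right_cancel₀ hr.ne' h1').symm
  rcases lt_or_gt_of_ne hr1 with hlt | hgt
  · -- r < 1, C = 2
    have hC2 : C = 2 := by rw [hC0, abs_of_pos (by linarith)]; ring
    have h2 : UpperHalfPlane.I ∈ {z : ℍ | (z.re ^ 2 + z.im ^ 2 + 1 +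
          Real.sqrt ((z.re ^ 2 - z.im ^ 2 + 1) ^ 2 + 4 * z.re ^ 2 * z.im ^ 2)) *
          (z.re ^ 2 + z.im ^ 2) = C * z.im ^ 2} := by
      simp only [Set.mem_setOf_eq, UpperHalfPlane.I_re, UpperHalfPlane.I_im]
      rw [show ((0:ℝ) ^ 2 - 1 ^ 2 + 1) ^ 2 + 4 * 0 ^ 2 * 1 ^ 2 = 0 by ring, Real.sqrt_zero, hC2]
      ring
    rw [← hset] at h2
    simp only [Set.mem_setOf_eq] at h2
    rw [dist_self, infDist_eq_foot r hr] at h2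
    have : UpperHalfPlane.I = foot r hr UpperHalfPlane.I := dist_eq_zero.1 h2.symm
    have hmem := foot_mem r hr UpperHalfPlane.I
    rw [← this] at hmem
    have : ‖(UpperHalfPlane.I : ℂ)‖ = 1 := by
      rw [UpperHalfPlane.coe_I]; simp
    rw [hmem] at this
    exact hr1 this
  · -- r > 1, C = 2r
    have hC2 : C = 2*r := by
      rw [hC0, abs_of_neg (by linarith : (1:ℝ) - r < 0)]; ring
    have hrp : (0:ℝ) < r + 1 := by linarith
    set Y : ℝ := (2*r^2+r+1)/(4*(r+1)) with hYdef
    set X2 : ℝ := (2*r^2-r-1)/(4*(r+1)) with hX2def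
    have hY : 0 < Y := by rw [hYdef]; positivity
    have hX2 : 0 ≤ X2 := by
      rw [hX2def]
      have : (0:ℝ) ≤ 2*r^2-r-1 := by nlinarith
      positivity
    have hy0 : 0 < Real.sqrt Y := Real.sqrt_pos.2 hY
    set z2 : ℍ := UpperHalfPlane.mk (Complex.mk (Real.sqrt X2) (Real.sqrt Y)) hy0 with hz2
    have hz2re : z2.re = Real.sqrt X2 := rfl
    have hz2im : z2.im = Real.sqrt Y := rfl
    have hx2 : z2.re ^ 2 = X2 := by rw [hz2re]; exact Real.sq_sqrt hX2
    have hy2' : z2.im ^ 2 = Y := by rw [hz2im]; exact Real.sq_sqrt hY.le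
    have h3 : z2 ∈ {z : ℍ | dist z UpperHalfPlane.I = Metric.infDist z (ell r)} := by
      refine mem_parabola r hr z2 ?_
      rw [show z2.re^2 = X2 from hx2, show z2.im^2 = Y from hy2']
      rw [hYdef, hX2def]
      field_simp
      ring
    rw [hset] at h3
    simp only [Set.mem_setOf_eq] at h3
    rw [hx2, hy2', hC2] at h3
    -- h3 : (X2 + Y + 1 + √((X2 - Y + 1)^2 + 4*X2*Y)) * (X2 + Y) = 2*r*Y
    set D : ℝ := Real.sqrt ((X2 - Y + 1)^2 + 4*X2*Y) with hDdef
    have hD0 : 0 ≤ D := Real.sqrt_nonneg _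
    have hD2 : D^2 = (X2 - Y + 1)^2 + 4*X2*Y := Real.sq_sqrt (by positivity)
    have hDs : D * (X2 + Y) = 2*r*Y - (X2 + Y + 1) * (X2 + Y) := by linarith [h3]
    have hsq : (D * (X2 + Y))^2 = (2*r*Y - (X2 + Y + 1) * (X2 + Y))^2 := by rw [hDs]
    rw [mul_pow, hD2] at hsq
    have eL : ((X2 - Y + 1)^2 + 4*X2*Y) * (X2+Y)^2 = r^8/(r+1)^4 := by
      rw [hYdef, hX2def]; field_simp; ring
    have eR : (2*r*Y - (X2+Y+1)*(X2+Y))^2 = r^2*(r^2+1)^2/(4*(r+1)^4) := by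
      rw [hYdef, hX2def]; field_simp; ring
    rw [eL, eR] at hsq
    rw [div_eq_div_iff (by positivity) (by positivity)] at hsq
    have key : (r^2+1)^2 < 4*r^6 := by
      nlinarith [mul_pos (mul_pos (sub_pos.2 hgt) (by positivity : (0:ℝ) < 2*r^2+r+1)) (by positivity : (0:ℝ) < 2*r^3+r^2+1)]
    nlinarith [hsq, mul_lt_mul_of_pos_left key (by positivity : (0:ℝ) < r^2*(r+1)^4)]
end

section
/- Let b > 1 and 0 < c < log b, and set r = √((−b + 2b²e^c − b·e^{2c}) / (b − 2e^c + b·e^{2c})) and ε = √(b·(−1 + 2b·e^c − e^{2c})·(b − 2e^c + b·e^{2c})) / (b·(e^{2c} − 1)). Then ε > 1, and the two-focus hyperbola equals the focus/directrix hyperbola with these parameters: {z ∈ ℍ : |dist z i − dist z (bi)| = c} = {z ∈ ℍ : sinh(dist z i) = ε·sinh(Metric.infDist z ℓ_r)}. -/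
open UpperHalfPlane

lemma dist_sq_complex (z w : ℂ) :
    dist z w ^ 2 = (z.re - w.re) ^ 2 + (z.im - w.im) ^ 2 := by
  rw [Complex.dist_eq, Complex.sq_norm]
  simp [Complex.normSq_apply]
  ring

lemma cosh_dist_coords (z w : ℍ) :
    Real.cosh (dist z w) = ((z.re - w.re) ^ 2 + z.im ^ 2 + w.im ^ 2) / (2 * z.im * w.im) := by
  have hz := z.im_pos
  have hw := w.im_pos
  rw [UpperHalfPlane.cosh_dist, dist_sq_complex, UpperHalfPlane.coe_re, UpperHalfPlane.coe_re,
    UpperHalfPlane.coe_im, UpperHalfPlane.coe_im]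
  field_simp
  ring

lemma sinh_infDist_ell (r : ℝ) (hr : 0 < r) (z : ℍ) :
    Real.sinh (Metric.infDist z (ell r)) =
      |z.re ^ 2 + z.im ^ 2 - r ^ 2| / (2 * r * z.im) := by
  set x := z.re with hx
  set y := z.im with hy
  have hy0 : 0 < y := z.im_pos
  set A : ℝ := x ^ 2 + y ^ 2 + r ^ 2 with hA
  have hApos : 0 < A := by positivity
  have hT2pos : 0 < A ^ 2 - 4 * r ^ 2 * x ^ 2 := by
    have h1 : A ^ 2 - 4 * r ^ 2 * x ^ 2 = ((x - r) ^ 2 + y ^ 2) * ((x + r) ^ 2 + y ^ 2) := by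
      rw [hA]; ring
    rw [h1]; positivity
  set T : ℝ := Real.sqrt (A ^ 2 - 4 * r ^ 2 * x ^ 2) with hTdef
  have hTpos : 0 < T := Real.sqrt_pos.2 hT2pos
  have hT2 : T ^ 2 = A ^ 2 - 4 * r ^ 2 * x ^ 2 := Real.sq_sqrt hT2pos.le
  set p0 : ℝ := 2 * r ^ 2 * x / A with hp0
  set q0 : ℝ := r * T / A with hq0
  have hq0pos : 0 < q0 := by positivity
  have hpA : p0 * A = 2 * r ^ 2 * x := by rw [hp0]; field_simp
  have hqA : q0 * A = r * T := by rw [hq0]; field_simp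
  set u0 : ℍ := UpperHalfPlane.mk ⟨p0, q0⟩ hq0pos with hu0
  have hu0re : u0.re = p0 := rfl
  have hu0im : u0.im = q0 := rfl
  have hnorm : p0 ^ 2 + q0 ^ 2 = r ^ 2 := by
    have h2 : (p0 ^ 2 + q0 ^ 2) * A ^ 2 = r ^ 2 * A ^ 2 := by
      linear_combination (p0 * A + 2 * r ^ 2 * x) * hpA + (q0 * A + r * T) * hqA + r ^ 2 * hT2
    exact mul_right_cancel₀ (by positivity) h2
  have hu0mem : u0 ∈ ell r := by
    show ‖(u0 : ℂ)‖ = r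
    have h1 : ‖(u0 : ℂ)‖ ^ 2 = r ^ 2 := by
      rw [Complex.sq_norm, Complex.normSq_apply]
      show p0 * p0 + q0 * q0 = r ^ 2
      linear_combination hnorm
    calc ‖(u0 : ℂ)‖ = Real.sqrt (‖(u0 : ℂ)‖ ^ 2) :=
          (Real.sqrt_sq (norm_nonneg _)).symm
      _ = Real.sqrt (r ^ 2) := by rw [h1]
      _ = r := Real.sqrt_sq hr.le
  have hcosh0 : Real.cosh (dist z u0) = T / (2 * r * y) := by
    rw [cosh_dist_coords, hu0re, hu0im, ← hx, ← hy]
    rw [div_eq_div_iff (by positivity) (by positivity)]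
    have h3 : (((x - p0) ^ 2 + y ^ 2 + q0 ^ 2) * (2 * r * y)) * A ^ 2
        = (T * (2 * y * q0)) * A ^ 2 := by
      linear_combination (-(2 * r * y) * (2 * x * A - p0 * A - 2 * r ^ 2 * x)) * hpA +
        ((2 * r * y) * (q0 * A + r * T) - 2 * y * T * A) * hqA +
        ((2 * r * y) * (r ^ 2 - A)) * hT2 + (-(2 * r * y * A ^ 2)) * hA
    exact mul_right_cancel₀ (by positivity) h3
  have hmin : ∀ u ∈ ell r, dist z u0 ≤ dist z u := by
    intro u hu
    set p : ℝ := u.re with hp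
    set q : ℝ := u.im with hq
    have hqpos : 0 < q := u.im_pos
    have hpq : p ^ 2 + q ^ 2 = r ^ 2 := by
      have h1 : ‖(u : ℂ)‖ ^ 2 = r ^ 2 := by rw [hu]
      rw [Complex.sq_norm, Complex.normSq_apply, UpperHalfPlane.coe_re, UpperHalfPlane.coe_im]
        at h1
      linear_combination h1
    have hA2 : 0 < A - 2 * x * p := by nlinarith [sq_nonneg (x - p), sq_nonneg q]
    have key : T * q ≤ r * (A - 2 * x * p) := by
      have hsq : (r * (A - 2 * x * p)) ^ 2 - (T * q) ^ 2 = (p * A - 2 * x * r ^ 2) ^ 2 := by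
        linear_combination (-(q ^ 2)) * hT2 + (-(A ^ 2 - 4 * r ^ 2 * x ^ 2)) * hpq
      nlinarith [mul_pos hTpos hqpos, mul_pos hr hA2, sq_nonneg (p * A - 2 * x * r ^ 2)]
    have hcc : Real.cosh (dist z u0) ≤ Real.cosh (dist z u) := by
      rw [hcosh0, cosh_dist_coords, ← hx, ← hy, ← hp, ← hq]
      rw [div_le_div_iff₀ (by positivity) (by positivity)]
      have heq : ((x - p) ^ 2 + y ^ 2 + q ^ 2) * (2 * r * y) = (A - 2 * x * p) * (2 * r * y) := by
        linear_combination (2 * r * y) * hpq + (-(2 * r * y)) * hA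
      rw [heq]
      calc T * (2 * y * q) = (T * q) * (2 * y) := by ring
        _ ≤ (r * (A - 2 * x * p)) * (2 * y) := by
            exact mul_le_mul_of_nonneg_right key (by positivity)
        _ = (A - 2 * x * p) * (2 * r * y) := by ring
    have := Real.cosh_le_cosh.1 hcc
    rwa [abs_of_nonneg dist_nonneg, abs_of_nonneg dist_nonneg] at this
  have hd0 : Metric.infDist z (ell r) = dist z u0 := by
    refine le_antisymm (Metric.infDist_le_dist_of_mem hu0mem) ?_
    by_contra hlt
    push_neg at hlt
    obtain ⟨u, hu, hdu⟩ := (Metric.infDist_lt_iff ⟨u0, hu0mem⟩).1 hlt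
    exact absurd hdu (not_lt.2 (hmin u hu))
  rw [hd0]
  have hsq : Real.sinh (dist z u0) ^ 2 = ((x ^ 2 + y ^ 2 - r ^ 2) / (2 * r * y)) ^ 2 := by
    have h4 : T ^ 2 - (2 * r * y) ^ 2 = (x ^ 2 + y ^ 2 - r ^ 2) ^ 2 := by
      linear_combination hT2 + (A + (x ^ 2 + y ^ 2 + r ^ 2)) * hA
    rw [Real.sinh_sq, hcosh0]
    field_simp
    linear_combination h4
  calc Real.sinh (dist z u0) = Real.sqrt (Real.sinh (dist z u0) ^ 2) :=
        (Real.sqrt_sq (Real.sinh_nonneg_iff.2 dist_nonneg)).symm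
    _ = Real.sqrt (((x ^ 2 + y ^ 2 - r ^ 2) / (2 * r * y)) ^ 2) := by rw [hsq]
    _ = |(x ^ 2 + y ^ 2 - r ^ 2) / (2 * r * y)| := Real.sqrt_sq_eq_abs _
    _ = |x ^ 2 + y ^ 2 - r ^ 2| / (2 * r * y) := by
        rw [abs_div, abs_of_pos (by positivity : (0:ℝ) < 2 * r * y)]

set_option maxHeartbeats 2000000 in
/-- Every two-focus hyperbola is a focus/directrix hyperbola, with explicit directrix
radius `r` and eccentricity `ε > 1`. -/
theorem stmt17 (b c : ℝ) (hb : 1 < b) (hc0 : 0 < c) (hc : c < Real.log b) (r ε : ℝ)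
    (hrdef : r = Real.sqrt ((-b + 2 * b ^ 2 * Real.exp c - b * Real.exp (2 * c)) /
        (b - 2 * Real.exp c + b * Real.exp (2 * c))))
    (hεdef : ε = Real.sqrt (b * (-1 + 2 * b * Real.exp c - Real.exp (2 * c)) *
        (b - 2 * Real.exp c + b * Real.exp (2 * c))) / (b * (Real.exp (2 * c) - 1))) :
    1 < ε ∧
      {z : ℍ | |dist z UpperHalfPlane.I - dist z (vpt b (by linarith))| = c} =
        {z : ℍ | Real.sinh (dist z UpperHalfPlane.I) =
          ε * Real.sinh (Metric.infDist z (ell r))} := by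
  have hb0 : (0:ℝ) < b := by linarith
  set E := Real.exp c with hEdef
  have hE1 : 1 < E := by rw [hEdef]; exact Real.one_lt_exp_iff.2 hc0
  have hEb : E < b := by
    have h := Real.exp_lt_exp.2 hc
    rwa [Real.exp_log hb0] at h
  have hE0 : 0 < E := by linarith
  have hE2c : Real.exp (2 * c) = E ^ 2 := by rw [two_mul, Real.exp_add]; ring
  set N : ℝ := 2 * b * E - E ^ 2 - 1 with hN
  set D : ℝ := b - 2 * E + b * E ^ 2 with hD
  set M : ℝ := E ^ 2 - 1 with hM
  have hNpos : 0 < N := by rw [hN]; nlinarith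
  have hDpos : 0 < D := by rw [hD]; nlinarith
  have hMpos : 0 < M := by rw [hM]; nlinarith
  have hr' : r = Real.sqrt (b * N / D) := by
    rw [hrdef, hE2c]
    congr 1
    rw [hN, hD]
    ring
  have hrpos : 0 < r := by
    rw [hr']
    exact Real.sqrt_pos.2 (by positivity)
  have hr2 : r ^ 2 = b * N / D := by
    rw [hr']
    exact Real.sq_sqrt (by positivity)
  have hε' : ε = Real.sqrt (b * N * D) / (b * M) := by
    have h1 : b * (-1 + 2 * b * E - E ^ 2) * (b - 2 * E + b * E ^ 2) = b * N * D := by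
      rw [hN, hD]; ring
    have h2 : b * (E ^ 2 - 1) = b * M := by rw [hM]
    rw [hεdef, hE2c, h1, h2]
  have hεpos : 0 < ε := by
    rw [hε']
    positivity
  have hε2 : ε ^ 2 = N * D / (b * M ^ 2) := by
    rw [hε', div_pow, Real.sq_sqrt (by positivity)]
    field_simp
  have hε1 : 1 < ε := by
    have hfac : N * D - b * M ^ 2 = 2 * (b * E - 1) * (1 + E ^ 2) * (b - E) := by
      rw [hN, hD, hM]; ring
    have h3 : 1 < ε ^ 2 := by
      rw [hε2, lt_div_iff₀ (by positivity)]
      nlinarith [mul_pos (mul_pos (mul_pos (by norm_num : (0:ℝ) < 2)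
        (by nlinarith : (0:ℝ) < b * E - 1)) (by positivity : (0:ℝ) < 1 + E ^ 2))
        (by linarith : (0:ℝ) < b - E)]
    nlinarith
  refine ⟨hε1, ?_⟩
  ext z
  show |dist z UpperHalfPlane.I - dist z (vpt b hb0)| = c ↔
    Real.sinh (dist z UpperHalfPlane.I) = ε * Real.sinh (Metric.infDist z (ell r))
  set x := z.re with hx
  set y := z.im with hy
  have hy0 : 0 < y := z.im_pos
  have hvb_re : (vpt b hb0).re = 0 := by simp [vpt]
  have hvb_im : (vpt b hb0).im = b := by simp [vpt]
  have hC1 : Real.cosh (dist z UpperHalfPlane.I) = (x ^ 2 + y ^ 2 + 1) / (2 * y) := by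
    rw [cosh_dist_coords, UpperHalfPlane.I_re, UpperHalfPlane.I_im, ← hx, ← hy]
    ring
  have hC2 : Real.cosh (dist z (vpt b hb0)) = (x ^ 2 + y ^ 2 + b ^ 2) / (2 * b * y) := by
    rw [cosh_dist_coords, hvb_re, hvb_im, ← hx, ← hy]
    ring
  have hK : Real.cosh c = (E ^ 2 + 1) / (2 * E) := by
    rw [Real.cosh_eq, Real.exp_neg, ← hEdef]
    field_simp
  have hdIv : dist UpperHalfPlane.I (vpt b hb0) = Real.log b := by
    rw [UpperHalfPlane.dist_of_re_eq (by rw [UpperHalfPlane.I_re, hvb_re]),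
      UpperHalfPlane.I_im, hvb_im, Real.log_one, Real.dist_eq, zero_sub, abs_neg,
      abs_of_pos (Real.log_pos hb)]
  have hsinf : Real.sinh (Metric.infDist z (ell r)) = |x ^ 2 + y ^ 2 - r ^ 2| / (2 * r * y) :=
    sinh_infDist_ell r hrpos z
  -- the coordinate form of the two-focus equation
  have key : ((x ^ 2 + y ^ 2 + 1) / (2 * y)) ^ 2 + ((x ^ 2 + y ^ 2 + b ^ 2) / (2 * b * y)) ^ 2
      - 2 * ((E ^ 2 + 1) / (2 * E)) * ((x ^ 2 + y ^ 2 + 1) / (2 * y))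
        * ((x ^ 2 + y ^ 2 + b ^ 2) / (2 * b * y)) + ((E ^ 2 + 1) / (2 * E)) ^ 2 - 1
      = ((E ^ 2 - 1) ^ 2 / (4 * E ^ 2)) *
        (ε ^ 2 * (x ^ 2 + y ^ 2 - r ^ 2) ^ 2 / (4 * r ^ 2 * y ^ 2)
          - (((x ^ 2 + y ^ 2 + 1) / (2 * y)) ^ 2 - 1)) := by
    have hNne : (2 * b * E - E ^ 2 - 1 : ℝ) ≠ 0 := by rw [← hN]; exact hNpos.ne'
    have hDne : (b - 2 * E + b * E ^ 2 : ℝ) ≠ 0 := by rw [← hD]; exact hDpos.ne'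
    have hMne : (E ^ 2 - 1 : ℝ) ≠ 0 := by rw [← hM]; exact hMpos.ne'
    have hNne' : (E * (2 * b - E) - 1 : ℝ) ≠ 0 := by
      have h : (E * (2 * b - E) - 1 : ℝ) = N := by rw [hN]; ring
      rw [h]; exact hNpos.ne'
    rw [hε2, hr2, hN, hD, hM]
    field_simp
    ring
  set Pv : ℝ := ((x ^ 2 + y ^ 2 + 1) / (2 * y)) ^ 2 + ((x ^ 2 + y ^ 2 + b ^ 2) / (2 * b * y)) ^ 2
      - 2 * ((E ^ 2 + 1) / (2 * E)) * ((x ^ 2 + y ^ 2 + 1) / (2 * y))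
        * ((x ^ 2 + y ^ 2 + b ^ 2) / (2 * b * y)) + ((E ^ 2 + 1) / (2 * E)) ^ 2 - 1 with hPv
  have hiff1 : |dist z UpperHalfPlane.I - dist z (vpt b hb0)| = c ↔ Pv = 0 := by
    rw [hPv, ← hC1, ← hC2, ← hK]
    set d1 := dist z UpperHalfPlane.I with hd1
    set d2 := dist z (vpt b hb0) with hd2
    have hs1 : Real.sinh d1 ^ 2 = Real.cosh d1 ^ 2 - 1 := Real.sinh_sq d1
    have hs2 : Real.sinh d2 ^ 2 = Real.cosh d2 ^ 2 - 1 := Real.sinh_sq d2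
    constructor
    · intro h
      have hcsub : Real.cosh d1 * Real.cosh d2 - Real.sinh d1 * Real.sinh d2 = Real.cosh c := by
        rw [← Real.cosh_sub, ← Real.cosh_abs, h]
      linear_combination (Real.cosh d1 * Real.cosh d2 - Real.cosh c
          + Real.sinh d1 * Real.sinh d2) * hcsub + Real.sinh d2 ^ 2 * hs1
          + (Real.cosh d1 ^ 2 - 1) * hs2
    · intro h
      have hsq : (Real.cosh d1 * Real.cosh d2 - Real.cosh c) ^ 2
          = (Real.sinh d1 * Real.sinh d2) ^ 2 := by
        linear_combination h + (-(Real.sinh d2 ^ 2)) * hs1 + (-(Real.cosh d1 ^ 2 - 1)) * hs2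
      rcases sq_eq_sq_iff_eq_or_eq_neg.1 hsq with h1 | h1
      · have h2 : Real.cosh (d1 - d2) = Real.cosh c := by
          rw [Real.cosh_sub]; linarith
        have h3 : |d1 - d2| = |c| :=
          le_antisymm (Real.cosh_le_cosh.1 h2.le) (Real.cosh_le_cosh.1 h2.ge)
        rwa [abs_of_pos hc0] at h3
      · exfalso
        have hadd : Real.cosh (d1 + d2) = Real.cosh c := by
          rw [Real.cosh_add]; linarith
        have htri : Real.log b ≤ d1 + d2 := by
          calc Real.log b = dist UpperHalfPlane.I (vpt b hb0) := hdIv.symm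
            _ ≤ dist UpperHalfPlane.I z + dist z (vpt b hb0) := dist_triangle _ _ _
            _ = d1 + d2 := by rw [dist_comm]
        have h4 : Real.cosh (Real.log b) ≤ Real.cosh (d1 + d2) := by
          apply Real.cosh_le_cosh.2
          rw [abs_of_nonneg (Real.log_pos hb).le,
            abs_of_nonneg (by positivity : (0:ℝ) ≤ d1 + d2)]
          exact htri
        have h5 : Real.cosh c < Real.cosh (Real.log b) := by
          apply Real.cosh_lt_cosh.2
          rw [abs_of_pos hc0, abs_of_pos (Real.log_pos hb)]
          exact hc
        linarith
  have hiff2 : (Real.sinh (dist z UpperHalfPlane.I)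
      = ε * Real.sinh (Metric.infDist z (ell r))) ↔ Pv = 0 := by
    rw [hsinf]
    set d1 := dist z UpperHalfPlane.I with hd1
    have hS1 : 0 ≤ Real.sinh d1 := Real.sinh_nonneg_iff.2 dist_nonneg
    have hs1 : Real.sinh d1 ^ 2 = ((x ^ 2 + y ^ 2 + 1) / (2 * y)) ^ 2 - 1 := by
      rw [Real.sinh_sq, hC1]
    have habs : (ε * (|x ^ 2 + y ^ 2 - r ^ 2| / (2 * r * y))) ^ 2
        = ε ^ 2 * (x ^ 2 + y ^ 2 - r ^ 2) ^ 2 / (4 * r ^ 2 * y ^ 2) := by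
      rw [mul_pow, div_pow, sq_abs]
      ring
    constructor
    · intro h
      have h2 : Real.sinh d1 ^ 2
          = ε ^ 2 * (x ^ 2 + y ^ 2 - r ^ 2) ^ 2 / (4 * r ^ 2 * y ^ 2) := by
        rw [h, habs]
      have hbr : ε ^ 2 * (x ^ 2 + y ^ 2 - r ^ 2) ^ 2 / (4 * r ^ 2 * y ^ 2)
          - (((x ^ 2 + y ^ 2 + 1) / (2 * y)) ^ 2 - 1) = 0 := by
        rw [← h2, ← hs1]; ring
      rw [key, hbr, mul_zero]
    · intro h
      rw [key] at h
      have hμ : ((E ^ 2 - 1) ^ 2 / (4 * E ^ 2) : ℝ) ≠ 0 := by positivity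
      have hbr := (mul_eq_zero.1 h).resolve_left hμ
      have h2 : Real.sinh d1 ^ 2 = (ε * (|x ^ 2 + y ^ 2 - r ^ 2| / (2 * r * y))) ^ 2 := by
        rw [habs, hs1]; linarith
      calc Real.sinh d1 = Real.sqrt (Real.sinh d1 ^ 2) := (Real.sqrt_sq hS1).symm
        _ = Real.sqrt ((ε * (|x ^ 2 + y ^ 2 - r ^ 2| / (2 * r * y))) ^ 2) := by rw [h2]
        _ = ε * (|x ^ 2 + y ^ 2 - r ^ 2| / (2 * r * y)) := Real.sqrt_sq (by positivity)
  rw [hiff1, hiff2]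
end

section
/- Let r > 1 and consider the degenerate focus/directrix hyperbola with eccentricity ε equal to r: S = {z ∈ ℍ : sinh(dist z i) = r·sinh(Metric.infDist z ℓ_r)}. Then (a) S = {z = x + iy ∈ ℍ : (r² + 1)x² + (r² − 1)y² = (r⁴ − 1)/2} (a Euclidean ellipse); (b) S meets the imaginary axis in exactly one point: for y > 0, the point iy lies in S if and only if y = √((r² + 1)/2); and (c) S is not a two-focus hyperbola: there are no points a₁ ≠ a₂ in ℍ and no c > 0 with S = {z ∈ ℍ : |dist z a₁ − dist z a₂| = c}. -/
open UpperHalfPlane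

set_option maxHeartbeats 1000000 in
lemma infDist_ell_eq (r : ℝ) (hr : 0 < r) (z : ℍ) :
    Metric.infDist z (ell r) =
      Real.arsinh (|z.re ^ 2 + z.im ^ 2 - r ^ 2| / (2 * r * z.im)) := by
  have hy0 : 0 < z.im := z.im_pos
  have h2 : (0:ℝ) < 2 := two_pos
  have h2ry : 0 < 2 * r * z.im := mul_pos (mul_pos h2 hr) hy0
  have hy2 : 0 < z.im * z.im := mul_pos hy0 hy0
  set A : ℝ := z.re ^ 2 + z.im ^ 2 + r ^ 2 with hA
  have hApos : 0 < A := by nlinarith [sq_nonneg z.re, sq_nonneg r]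
  have hA1 : 0 < A - 2 * r * z.re := by nlinarith [sq_nonneg (z.re - r)]
  have hA2 : 0 < A + 2 * r * z.re := by nlinarith [sq_nonneg (z.re + r)]
  have hD2 : 0 < A ^ 2 - 4 * r ^ 2 * z.re ^ 2 := by nlinarith
  set D : ℝ := Real.sqrt (A ^ 2 - 4 * r ^ 2 * z.re ^ 2) with hD
  have hDpos : 0 < D := Real.sqrt_pos.2 hD2
  have hDsq : D ^ 2 = A ^ 2 - 4 * r ^ 2 * z.re ^ 2 := Real.sq_sqrt hD2.le
  set s0 : ℝ := |z.re ^ 2 + z.im ^ 2 - r ^ 2| / (2 * r * z.im) with hs0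
  have hs0n : 0 ≤ s0 := div_nonneg (abs_nonneg _) h2ry.le
  have hars_nonneg : 0 ≤ Real.arsinh s0 := Real.arsinh_nonneg_iff.2 hs0n
  have hcosh_ars : Real.cosh (Real.arsinh s0) = D / (2 * r * z.im) := by
    rw [Real.cosh_arsinh, show (1:ℝ) + s0 ^ 2 = (D / (2 * r * z.im)) ^ 2 from ?_,
      Real.sqrt_sq (div_nonneg hDpos.le h2ry.le)]
    rw [hs0, div_pow, div_pow, sq_abs, hDsq, hA]
    field_simp
    ring
  -- lower bound
  have hlb : ∀ u ∈ ell r, Real.arsinh s0 ≤ dist z u := by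
    intro u hu
    have hb : 0 < u.im := u.im_pos
    have habs : u.re ^ 2 + u.im ^ 2 = r ^ 2 := by
      have h2' : ‖(u : ℂ)‖ ^ 2 = r ^ 2 := by rw [hu]
      rw [Complex.sq_norm, Complex.normSq_apply] at h2'
      simp only [UpperHalfPlane.coe_re, UpperHalfPlane.coe_im] at h2'
      linear_combination h2'
    have hcd : Real.cosh (dist z u) = (A - 2 * z.re * u.re) / (2 * z.im * u.im) := by
      rw [UpperHalfPlane.cosh_dist']
      congr 1
      linear_combination habs - hA
    have hAa : 0 < A - 2 * z.re * u.re := by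
      nlinarith [sq_nonneg (z.re - u.re), sq_nonneg u.im]
    have hexp : (r * (A - 2 * z.re * u.re)) ^ 2 - (u.im * D) ^ 2
        = (u.re * A - 2 * r ^ 2 * z.re) ^ 2 := by
      linear_combination (-(A ^ 2 - 4 * r ^ 2 * z.re ^ 2)) * habs - u.im ^ 2 * hDsq
    have hkey : u.im * D ≤ r * (A - 2 * z.re * u.re) := by
      have hsq : (u.im * D) ^ 2 ≤ (r * (A - 2 * z.re * u.re)) ^ 2 := by
        nlinarith [sq_nonneg (u.re * A - 2 * r ^ 2 * z.re)]
      calc u.im * D = Real.sqrt ((u.im * D) ^ 2) :=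
            (Real.sqrt_sq (mul_nonneg hb.le hDpos.le)).symm
        _ ≤ Real.sqrt ((r * (A - 2 * z.re * u.re)) ^ 2) := Real.sqrt_le_sqrt hsq
        _ = r * (A - 2 * z.re * u.re) := Real.sqrt_sq (mul_nonneg hr.le hAa.le)
    have hcc : Real.cosh (Real.arsinh s0) ≤ Real.cosh (dist z u) := by
      rw [hcosh_ars, hcd, div_le_div_iff₀ h2ry (mul_pos (mul_pos h2 hy0) hb)]
      calc D * (2 * z.im * u.im) = (2 * z.im) * (u.im * D) := by ring
        _ ≤ (2 * z.im) * (r * (A - 2 * z.re * u.re)) :=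
            mul_le_mul_of_nonneg_left hkey (by linarith)
        _ = (A - 2 * z.re * u.re) * (2 * r * z.im) := by ring
    have h3 := Real.cosh_le_cosh.1 hcc
    rwa [abs_of_nonneg hars_nonneg, abs_of_nonneg dist_nonneg] at h3
  -- the achieving point
  set a0 : ℝ := 2 * r ^ 2 * z.re / A with ha0
  set b0 : ℝ := r * D / A with hb0
  have hb0pos : 0 < b0 := div_pos (mul_pos hr hDpos) hApos
  have hAne : A ≠ 0 := ne_of_gt hApos
  have hsum : a0 ^ 2 + b0 ^ 2 = r ^ 2 := by
    rw [ha0, hb0, div_pow, div_pow, ← add_div, div_eq_iff (pow_ne_zero 2 hAne)]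
    linear_combination r ^ 2 * hDsq
  set u0 : ℍ := UpperHalfPlane.mk (⟨a0, b0⟩ : ℂ) hb0pos with hu0
  have hu0re : u0.re = a0 := rfl
  have hu0im : u0.im = b0 := rfl
  have hmem : u0 ∈ ell r := by
    show ‖(⟨a0, b0⟩ : ℂ)‖ = r
    rw [Complex.norm_def, Complex.normSq_mk,
      show a0 * a0 + b0 * b0 = r ^ 2 by linear_combination hsum, Real.sqrt_sq hr.le]
  have hdist : dist z u0 = Real.arsinh s0 := by
    have hcd : Real.cosh (dist z u0) = (A - 2 * z.re * a0) / (2 * z.im * b0) := by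
      rw [UpperHalfPlane.cosh_dist', hu0re, hu0im]
      congr 1
      linear_combination hsum - hA
    have heq : (A - 2 * z.re * a0) / (2 * z.im * b0) = D / (2 * r * z.im) := by
      rw [ha0, hb0, div_eq_div_iff (ne_of_gt (mul_pos (mul_pos h2 hy0)
          (div_pos (mul_pos hr hDpos) hApos))) (ne_of_gt h2ry)]
      field_simp
      linear_combination (-1) * hDsq
    have hc : Real.cosh (dist z u0) = Real.cosh (Real.arsinh s0) := by
      rw [hcd, heq, hcosh_ars]
    have h1 := Real.cosh_le_cosh.1 hc.le
    have h2' := Real.cosh_le_cosh.1 hc.ge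
    have h3 := le_antisymm h1 h2'
    rwa [abs_of_nonneg dist_nonneg, abs_of_nonneg hars_nonneg] at h3
  refine le_antisymm ?_ ?_
  · calc Metric.infDist z (ell r) ≤ dist z u0 := Metric.infDist_le_dist_of_mem hmem
      _ = Real.arsinh s0 := hdist
  · rw [Metric.infDist_eq_iInf]
    haveI : Nonempty (ell r) := ⟨⟨u0, hmem⟩⟩
    exact le_ciInf fun u => hlb u u.2

lemma mem_S_iff (r : ℝ) (hr : 1 < r) (z : ℍ) :
    Real.sinh (dist z UpperHalfPlane.I) = r * Real.sinh (Metric.infDist z (ell r)) ↔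
    (r ^ 2 + 1) * z.re ^ 2 + (r ^ 2 - 1) * z.im ^ 2 = (r ^ 4 - 1) / 2 := by
  have hr0 : 0 < r := lt_trans one_pos hr
  have hy0 : 0 < z.im := z.im_pos
  have h2ry : 0 < 2 * r * z.im := by positivity
  rw [infDist_ell_eq r hr0 z, Real.sinh_arsinh]
  have hcosh : Real.cosh (dist z UpperHalfPlane.I) = (z.re ^ 2 + z.im ^ 2 + 1) / (2 * z.im) := by
    rw [UpperHalfPlane.cosh_dist', UpperHalfPlane.I_re, UpperHalfPlane.I_im]
    rw [mul_one, sub_zero, one_pow]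
  have hsn : 0 ≤ Real.sinh (dist z UpperHalfPlane.I) := Real.sinh_nonneg_iff.2 dist_nonneg
  have hrs : 0 ≤ r * (|z.re ^ 2 + z.im ^ 2 - r ^ 2| / (2 * r * z.im)) :=
    mul_nonneg hr0.le (div_nonneg (abs_nonneg _) h2ry.le)
  rw [← sq_eq_sq₀ hsn hrs, Real.sinh_sq, hcosh, mul_pow, div_pow, div_pow, sq_abs]
  have hKpos : (0:ℝ) < (2 * r * z.im) ^ 2 := by positivity
  constructor
  · intro h
    field_simp at h
    have h'' : ((z.re ^ 2 + z.im ^ 2 + 1) ^ 2 - (2 * z.im) ^ 2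
        - (z.re ^ 2 + z.im ^ 2 - r ^ 2) ^ 2) * (2 * r * z.im) ^ 2 = 0 := by
      linear_combination (2 * r * z.im) ^ 2 * h
    have h' : (z.re ^ 2 + z.im ^ 2 + 1) ^ 2 - (2 * z.im) ^ 2
        - (z.re ^ 2 + z.im ^ 2 - r ^ 2) ^ 2 = 0 := by
      rcases mul_eq_zero.1 h'' with h3 | h3
      · exact h3
      · exact absurd h3 (ne_of_gt hKpos)
    linear_combination (1/2) * h'
  · intro h
    have h' : (z.re ^ 2 + z.im ^ 2 + 1) ^ 2 - (2 * z.im) ^ 2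
        - (z.re ^ 2 + z.im ^ 2 - r ^ 2) ^ 2 = 0 := by linear_combination 2 * h
    field_simp
    linear_combination h'

-- the ellipse set is preconnected
lemma ellipse_preconnected (r : ℝ) (hr : 1 < r) :
    IsPreconnected {z : ℍ | (r ^ 2 + 1) * z.re ^ 2 + (r ^ 2 - 1) * z.im ^ 2 = (r ^ 4 - 1) / 2} := by
  have hr0 : (0:ℝ) < r ^ 2 - 1 := by nlinarith
  have hr1 : (0:ℝ) < r ^ 2 + 1 := by positivity
  set T : Set ℍ := {z : ℍ | (r ^ 2 + 1) * z.re ^ 2 + (r ^ 2 - 1) * z.im ^ 2 = (r ^ 4 - 1) / 2}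
    with hT
  set x0 : ℝ := Real.sqrt ((r ^ 2 - 1) / 2) with hx0
  have hx0sq : x0 ^ 2 = (r ^ 2 - 1) / 2 := Real.sq_sqrt (by linarith)
  set yf : ℝ → ℝ := fun x => Real.sqrt (((r ^ 4 - 1) / 2 - (r ^ 2 + 1) * x ^ 2) / (r ^ 2 - 1))
    with hyf
  have hyfc : Continuous yf := by
    apply Real.continuous_sqrt.comp
    fun_prop
  set ψ : ℝ → ℂ := fun x => (x : ℂ) + (yf x : ℂ) * Complex.I with hψ
  have hψc : Continuous ψ :=
    Complex.continuous_ofReal.add ((Complex.continuous_ofReal.comp hyfc).mul continuous_const)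
  have hψre : ∀ x, (ψ x).re = x := by intro x; simp [hψ]
  have hψim : ∀ x, (ψ x).im = yf x := by intro x; simp [hψ]
  have hpos : ∀ x ∈ Set.Ioo (-x0) x0,
      0 < ((r ^ 4 - 1) / 2 - (r ^ 2 + 1) * x ^ 2) / (r ^ 2 - 1) := by
    rintro x ⟨h1, h2⟩
    have hxabs : |x| < x0 := abs_lt.2 ⟨h1, h2⟩
    have hxsq : x ^ 2 < (r ^ 2 - 1) / 2 := by
      have := sq_lt_sq' h1 h2
      rw [hx0sq] at this
      exact this
    apply div_pos _ hr0
    nlinarith [hxsq]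
  have himg : (fun z : ℍ => (z : ℂ)) '' T = ψ '' Set.Ioo (-x0) x0 := by
    ext w
    constructor
    · rintro ⟨z, hz, rfl⟩
      rw [hT, Set.mem_setOf_eq] at hz
      have hy0 : 0 < z.im := z.im_pos
      refine ⟨z.re, ?_, ?_⟩
      · have hxsq : z.re ^ 2 < (r ^ 2 - 1) / 2 := by nlinarith [mul_pos hy0 hy0]
        have habs : |z.re| < x0 := by
          rw [← Real.sqrt_sq_eq_abs, hx0]
          exact Real.sqrt_lt_sqrt (sq_nonneg _) hxsq
        exact abs_lt.1 habs
      · have hsq : ((r ^ 4 - 1) / 2 - (r ^ 2 + 1) * z.re ^ 2) / (r ^ 2 - 1) = z.im ^ 2 := by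
          rw [div_eq_iff (ne_of_gt hr0)]
          linarith [hz]
        have hyeq : yf z.re = z.im := by
          show Real.sqrt (((r ^ 4 - 1) / 2 - (r ^ 2 + 1) * z.re ^ 2) / (r ^ 2 - 1)) = z.im
          rw [hsq, Real.sqrt_sq hy0.le]
        refine Complex.ext ?_ ?_
        · simp [hψre]
        · simp [hψim, hyeq]
    · rintro ⟨x, hx, rfl⟩
      have hp := hpos x hx
      have him : 0 < (ψ x).im := by
        rw [hψim]
        exact Real.sqrt_pos.2 hp
      refine ⟨UpperHalfPlane.mk (ψ x) him, ?_, rfl⟩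
      rw [hT, Set.mem_setOf_eq]
      have hre : (UpperHalfPlane.mk (ψ x) him).re = x := hψre x
      have him' : (UpperHalfPlane.mk (ψ x) him).im = yf x := hψim x
      rw [hre, him']
      have : yf x ^ 2 = ((r ^ 4 - 1) / 2 - (r ^ 2 + 1) * x ^ 2) / (r ^ 2 - 1) :=
        Real.sq_sqrt hp.le
      rw [this]
      field_simp
      ring
  have h1 : IsPreconnected (ψ '' Set.Ioo (-x0) x0) :=
    (isPreconnected_Ioo).image ψ hψc.continuousOn
  rw [← himg] at h1
  exact (Topology.IsInducing.isPreconnected_image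
    UpperHalfPlane.isEmbedding_coe.toIsInducing).1 h1


/-- The degenerate focus/directrix ‘hyperbola’ with `ε = r`: it is a Euclidean ellipse,
meets the imaginary axis in exactly one point, and is not a two-focus hyperbola. -/
theorem stmt19 (r : ℝ) (hr : 1 < r) (S : Set ℍ)
    (hS : S = {z : ℍ | Real.sinh (dist z UpperHalfPlane.I) =
        r * Real.sinh (Metric.infDist z (ell r))}) :
    (S = {z : ℍ | (r ^ 2 + 1) * z.re ^ 2 + (r ^ 2 - 1) * z.im ^ 2 = (r ^ 4 - 1) / 2}) ∧
    (∀ (y : ℝ) (hy : 0 < y), vpt y hy ∈ S ↔ y = Real.sqrt ((r ^ 2 + 1) / 2)) ∧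
    ¬ ∃ (a₁ a₂ : ℍ) (c : ℝ), a₁ ≠ a₂ ∧ 0 < c ∧
        S = {z : ℍ | |dist z a₁ - dist z a₂| = c} := by
  have hr0 : 0 < r := lt_trans one_pos hr
  have hrne : (r ^ 2 - 1) ≠ 0 := by nlinarith
  have ha : S = {z : ℍ | (r ^ 2 + 1) * z.re ^ 2 + (r ^ 2 - 1) * z.im ^ 2 = (r ^ 4 - 1) / 2} := by
    rw [hS]
    ext z
    simp only [Set.mem_setOf_eq]
    exact mem_S_iff r hr z
  have hb : ∀ (y : ℝ) (hy : 0 < y), vpt y hy ∈ S ↔ y = Real.sqrt ((r ^ 2 + 1) / 2) := by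
    intro y hy
    rw [ha]
    simp only [Set.mem_setOf_eq]
    have hre : (vpt y hy).re = 0 := by simp [vpt]
    have him : (vpt y hy).im = y := by simp [vpt]
    rw [hre, him]
    constructor
    · intro h
      have h2 : (r ^ 2 - 1) * y ^ 2 = (r ^ 2 - 1) * ((r ^ 2 + 1) / 2) := by
        linear_combination h
      have hysq : y ^ 2 = (r ^ 2 + 1) / 2 := mul_left_cancel₀ hrne h2
      rw [← hysq, Real.sqrt_sq hy.le]
    · intro h
      have hysq : y ^ 2 = (r ^ 2 + 1) / 2 := by
        rw [h]; exact Real.sq_sqrt (by positivity)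
      linear_combination (r ^ 2 - 1) * hysq
  refine ⟨ha, hb, ?_⟩
  rintro ⟨a₁, a₂, c, hne, hc, hS'⟩
  -- S contains a point
  have hy0pos : (0:ℝ) < Real.sqrt ((r ^ 2 + 1) / 2) := Real.sqrt_pos.2 (by positivity)
  have hvS : vpt _ hy0pos ∈ S := (hb _ hy0pos).2 rfl
  -- the function and its continuity
  set f : ℍ → ℝ := fun z => dist z a₁ - dist z a₂ with hf
  have hfc : Continuous f :=
    (continuous_id.dist continuous_const).sub (continuous_id.dist continuous_const)
  -- c ≤ dist a₁ a₂
  have hv1 : |f (vpt _ hy0pos)| = c := by rw [hS'] at hvS; exact hvS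
  have hcd : c ≤ dist a₁ a₂ := by
    have h2 := abs_dist_sub_le a₁ a₂ (vpt _ hy0pos)
    rw [dist_comm a₁, dist_comm a₂] at h2
    rw [hf] at hv1
    simp only at hv1
    linarith [hv1 ▸ h2]
  -- the clamped segment from a₁ to a₂
  set p : ℝ → ℝ := fun t => max 0 (min 1 t) with hp
  have hp0 : ∀ t, 0 ≤ p t := fun t => le_max_left _ _
  have hp1 : ∀ t, p t ≤ 1 := fun t => max_le zero_le_one (min_le_left _ _)
  have hpc : Continuous p := continuous_const.max (continuous_const.min continuous_id)
  set w : ℝ → ℂ := fun t => ((1 - p t : ℝ) : ℂ) * a₁ + ((p t : ℝ) : ℂ) * a₂ with hw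
  have hwc : Continuous w :=
    ((Complex.continuous_ofReal.comp (continuous_const.sub hpc)).mul continuous_const).add
      ((Complex.continuous_ofReal.comp hpc).mul continuous_const)
  have hwim : ∀ t, 0 < (w t).im := by
    intro t
    have h1 := a₁.im_pos
    have h2 := a₂.im_pos
    have hexp : (w t).im = (1 - p t) * a₁.im + p t * a₂.im := by
      rw [hw]; simp
    rw [hexp]
    have hm : 0 < min a₁.im a₂.im := lt_min h1 h2
    nlinarith [mul_nonneg (sub_nonneg.2 (hp1 t)) (sub_nonneg.2 (min_le_left a₁.im a₂.im)),
      mul_nonneg (hp0 t) (sub_nonneg.2 (min_le_right a₁.im a₂.im)), hm]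
  set γ : ℝ → ℍ := fun t => UpperHalfPlane.mk (w t) (hwim t) with hγ
  have hγc : Continuous γ := UpperHalfPlane.isEmbedding_coe.continuous_iff.2 hwc
  have hp00 : p 0 = 0 := by rw [hp]; norm_num
  have hp11 : p 1 = 1 := by rw [hp]; norm_num
  have hγ0 : γ 0 = a₁ := by
    apply UpperHalfPlane.ext
    show ((1 - p 0 : ℝ) : ℂ) * a₁ + ((p 0 : ℝ) : ℂ) * a₂ = (a₁ : ℂ)
    rw [hp00]; push_cast; ring
  have hγ1 : γ 1 = a₂ := by
    apply UpperHalfPlane.ext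
    show ((1 - p 1 : ℝ) : ℂ) * a₁ + ((p 1 : ℝ) : ℂ) * a₂ = (a₂ : ℂ)
    rw [hp11]; push_cast; ring
  set g : ℝ → ℝ := fun t => f (γ t) with hg
  have hgc : Continuous g := hfc.comp hγc
  have hg0 : g 0 = -(dist a₁ a₂) := by
    rw [hg]; simp only [hγ0, hf]; simp [dist_comm]
  have hg1 : g 1 = dist a₁ a₂ := by
    rw [hg]; simp only [hγ1, hf]; simp [dist_comm]
  -- points with f = c and f = -c
  obtain ⟨t1, _, hgt1⟩ := intermediate_value_Icc (zero_le_one) hgc.continuousOn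
    (show c ∈ Set.Icc (g 0) (g 1) by
      rw [hg0, hg1]; exact ⟨by linarith [dist_nonneg (x := a₁) (y := a₂)], hcd⟩)
  obtain ⟨t2, _, hgt2⟩ := intermediate_value_Icc (zero_le_one) hgc.continuousOn
    (show -c ∈ Set.Icc (g 0) (g 1) by rw [hg0, hg1]; exact ⟨by linarith, by linarith⟩)
  have hft1 : f (γ t1) = c := hgt1
  have hft2 : f (γ t2) = -c := hgt2
  have hz1 : γ t1 ∈ S := by
    rw [hS']
    show |f (γ t1)| = c
    rw [hft1]
    exact abs_of_pos hc
  have hz2 : γ t2 ∈ S := by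
    rw [hS']
    show |f (γ t2)| = c
    rw [hft2, abs_neg]
    exact abs_of_pos hc
  -- intermediate value on the connected set S
  have hconn : IsPreconnected S := by
    rw [ha]; exact ellipse_preconnected r hr
  have h0mem : (0:ℝ) ∈ Set.Icc (f (γ t2)) (f (γ t1)) := by
    rw [hft1, hft2]; exact ⟨by linarith, by linarith⟩
  obtain ⟨z0, hz0S, hz0⟩ := hconn.intermediate_value hz2 hz1 hfc.continuousOn h0mem
  have hcz : |f z0| = c := by rw [hS'] at hz0S; exact hz0S
  rw [hz0] at hcz
  simp at hcz
  linarith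
end
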